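/- arXiv:1703.00469 — 3 statements merged into one kernel-verified Lean document; each statement's English description precedes it below -/
import Mathlib

section
/- In the error-in-variables model with diagonal measurement-error covariance Γ (so Γ_{j,-j} = 0), if μ₀ʲ satisfies the population orthogonality E[(x_j − x_{-j}ᵀμ₀ʲ)x_{-j}] = 0, then E[z_{-j}(z_j − z_{-j}ᵀμ₀ʲ)] = Γ_{j,-j} − Γ_{-j,-j}μ₀ʲ; consequently the corrected moment condition E[z_{-j}(z_j − z_{-j}ᵀμ₀ʲ) + Γ_{-j,-j}μ₀ʲ] = 0 holds, i.e., the auxiliary regression of z_j on z_{-j} is itself a high-dimensional linear model with error-in-variables of the same form. -/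
open MeasureTheory ProbabilityTheory Finset Filter

noncomputable section

namespace EIV

/-- ℓ₂ norm of a finite vector. -/
def l2 {m : ℕ} (v : Fin m → ℝ) : ℝ := Real.sqrt (∑ k, v k ^ 2)

/-- ℓ₁ norm of a finite vector. -/
def l1 {m : ℕ} (v : Fin m → ℝ) : ℝ := ∑ k, |v k|

/-- ℓ₀ "norm" (number of nonzero coordinates). -/
def l0 {m : ℕ} (v : Fin m → ℝ) : ℕ := (Function.support v).ncard

/-- A real random variable is subgaussian with variance parameter `γ2`. -/
def SubG {Ω : Type} [MeasurableSpace Ω] (μ : Measure Ω) (f : Ω → ℝ) (γ2 : ℝ) : Prop :=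
  ∀ t : ℝ, ∫ ω, Real.exp (t * f ω) ∂μ ≤ Real.exp (γ2 * t ^ 2 / 2)

/-- A random vector is subgaussian with variance parameter `γ2`. -/
def SubGVec {Ω : Type} [MeasurableSpace Ω] {p : ℕ} (μ : Measure Ω)
    (f : Ω → Fin p → ℝ) (γ2 : ℝ) : Prop :=
  ∀ v : Fin p → ℝ, (∑ k, v k ^ 2) = 1 → SubG μ (fun ω => ∑ k, v k * f ω k) γ2

/-- Response variable `y = xᵀβ₀ + ξ`. -/
def yval {Ω : Type} {p : ℕ} (x : Ω → Fin p → ℝ) (ξ : Ω → ℝ) (β₀ : Fin p → ℝ) (ω : Ω) : ℝ :=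
  (∑ j, x ω j * β₀ j) + ξ ω

/-- Observed covariates `z = x + w`. -/
def zval {Ω : Type} {p : ℕ} (x w : Ω → Fin p → ℝ) (ω : Ω) (j : Fin p) : ℝ := x ω j + w ω j

/-- Diagonal of the covariance matrix `Γ = cov(w)` (which is assumed diagonal). -/
def Γv {Ω : Type} [MeasurableSpace Ω] {p : ℕ} (μ : Measure Ω) (w : Ω → Fin p → ℝ)
    (j : Fin p) : ℝ := ∫ ω, (w ω j) ^ 2 ∂μ

/-- The orthogonal score function
`ψ_j(y,z,θ,ηʲ) = (eʲ−μʲ)ᵀ{z(y − z_jθ − z_{-j}ᵀβ_{-j}) + Γ(θeʲ + β_{-j})}`,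
where `Γ` is diagonal (represented by the vector of its diagonal entries). -/
def score {p : ℕ} (Γ : Fin p → ℝ) (j : Fin p) (yy : ℝ) (zz : Fin p → ℝ)
    (θ : ℝ) (β μv : Fin p → ℝ) : ℝ :=
  ∑ k, ((if k = j then (1 : ℝ) else 0) - μv k) *
    (zz k * (yy - zz j * θ - ∑ l ∈ Finset.univ.erase j, zz l * β l)
      + Γ k * (if k = j then θ else β k))

/-- `Σ_j = E[(z_j − z_{-j}ᵀμ₀ʲ)z_j] − Γ_{jj}`. -/
def Sigpop {Ω : Type} [MeasurableSpace Ω] {p : ℕ} (μ : Measure Ω)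
    (x w : Ω → Fin p → ℝ) (μ₀ : Fin p → Fin p → ℝ) (j : Fin p) : ℝ :=
  (∫ ω, (zval x w ω j - ∑ k ∈ Finset.univ.erase j, zval x w ω k * μ₀ j k) * zval x w ω j ∂μ)
    - Γv μ w j

/-- `σ_j = Σ_j⁻¹ (E[ψ_j²(y,z,β₀ⱼ,η₀ʲ)])^{1/2}`. -/
def sigpop {Ω : Type} [MeasurableSpace Ω] {p : ℕ} (μ : Measure Ω)
    (x w : Ω → Fin p → ℝ) (ξ : Ω → ℝ) (β₀ : Fin p → ℝ) (μ₀ : Fin p → Fin p → ℝ)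
    (j : Fin p) : ℝ :=
  (Sigpop μ x w μ₀ j)⁻¹ *
    Real.sqrt (∫ ω, (score (Γv μ w) j (yval x ξ β₀ ω) (zval x w ω) (β₀ j) β₀ (μ₀ j)) ^ 2 ∂μ)

/-- `ψ̄_j(y,z) = −σ_j⁻¹Σ_j⁻¹ψ_j(y,z,β₀ⱼ,η₀ʲ)`. -/
def ψbar {Ω : Type} [MeasurableSpace Ω] {p : ℕ} (μ : Measure Ω)
    (x w : Ω → Fin p → ℝ) (ξ : Ω → ℝ) (β₀ : Fin p → ℝ) (μ₀ : Fin p → Fin p → ℝ)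
    (j : Fin p) (ω : Ω) : ℝ :=
  -((sigpop μ x w ξ β₀ μ₀ j)⁻¹ * (Sigpop μ x w μ₀ j)⁻¹ *
    score (Γv μ w) j (yval x ξ β₀ ω) (zval x w ω) (β₀ j) β₀ (μ₀ j))

/-- `Σ̂_j = n⁻¹ Σᵢ (z_{ij} − z_{i,-j}ᵀμ̂ʲ) z_{ij} − Γ̂_{jj}`, on the sample `d` of size `n`;
`Γe` is the (possibly estimated) diagonal of `Γ`. -/
def Sighat {Ω : Type} {p n : ℕ} (x w : Ω → Fin p → ℝ)
    (Γe : (Fin n → Ω) → Fin p → ℝ) (μhat : Fin p → (Fin n → Ω) → Fin p → ℝ)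
    (j : Fin p) (d : Fin n → Ω) : ℝ :=
  (n : ℝ)⁻¹ * (∑ i, (zval x w (d i) j
      - ∑ k ∈ Finset.univ.erase j, zval x w (d i) k * μhat j d k) * zval x w (d i) j)
    - Γe d j

/-- The orthogonal-score estimator `β̌_j` (Algorithm 1 when `Γe` is the true `Γ`,
Algorithm 2 when `Γe` is an estimator `Γ̂`). -/
def βcheck {Ω : Type} {p n : ℕ} (x w : Ω → Fin p → ℝ) (ξ : Ω → ℝ) (β₀ : Fin p → ℝ)
    (Γe : (Fin n → Ω) → Fin p → ℝ) (βhat : (Fin n → Ω) → Fin p → ℝ)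
    (μhat : Fin p → (Fin n → Ω) → Fin p → ℝ) (j : Fin p) (d : Fin n → Ω) : ℝ :=
  (Sighat x w Γe μhat j d)⁻¹ *
    ((n : ℝ)⁻¹ * (∑ i, (zval x w (d i) j
          - ∑ k ∈ Finset.univ.erase j, zval x w (d i) k * μhat j d k)
        * (yval x ξ β₀ (d i) - ∑ k ∈ Finset.univ.erase j, zval x w (d i) k * βhat d k))
      - ∑ k ∈ Finset.univ.erase j, μhat j d k * Γe d k * βhat d k)

/-- Plug-in estimator `σ̂_j = Σ̂_j⁻¹ {n⁻¹Σᵢ ψ_j²(y_i,z_i,β̂_j,η̂ʲ)}^{1/2}`. -/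
def sighat {Ω : Type} {p n : ℕ} (x w : Ω → Fin p → ℝ) (ξ : Ω → ℝ) (β₀ : Fin p → ℝ)
    (Γe : (Fin n → Ω) → Fin p → ℝ) (βhat : (Fin n → Ω) → Fin p → ℝ)
    (μhat : Fin p → (Fin n → Ω) → Fin p → ℝ) (j : Fin p) (d : Fin n → Ω) : ℝ :=
  (Sighat x w Γe μhat j d)⁻¹ *
    Real.sqrt ((n : ℝ)⁻¹ * ∑ i, (score (Γe d) j (yval x ξ β₀ (d i)) (zval x w (d i))
        (βhat d j) (βhat d) (μhat j d)) ^ 2)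

/-- Condition A of the paper. -/
def CondA {Ω : Type} [MeasurableSpace Ω] {p : ℕ} (μ : Measure Ω)
    (x w : Ω → Fin p → ℝ) (ξ : Ω → ℝ) (c C : ℝ) : Prop :=
  Measurable x ∧ Measurable w ∧ Measurable ξ ∧
  (∃ σx2, 0 ≤ σx2 ∧ σx2 ≤ C ∧ SubGVec μ x σx2) ∧
  (∀ j, ∫ ω, x ω j ∂μ = 0) ∧
  (∀ v : Fin p → ℝ,
      c * (∑ k, v k ^ 2) ≤ ∑ j, ∑ k, v j * v k * ∫ ω, x ω j * x ω k ∂μ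
      ∧ (∑ j, ∑ k, v j * v k * ∫ ω, x ω j * x ω k ∂μ) ≤ C * (∑ k, v k ^ 2)) ∧
  (∃ σξ2, 0 ≤ σξ2 ∧ σξ2 ≤ C ∧ SubG μ ξ σξ2) ∧ (∫ ω, ξ ω ∂μ = 0) ∧
  IndepFun (fun ω => (x ω, w ω)) ξ μ ∧
  (∃ σw2, 0 ≤ σw2 ∧ σw2 ≤ C ∧ SubGVec μ w σw2) ∧
  (∀ j, ∫ ω, w ω j ∂μ = 0) ∧
  (∀ j k, ∫ ω, x ω j * w ω k ∂μ = 0) ∧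
  (∀ j k, j ≠ k → ∫ ω, w ω j * w ω k ∂μ = 0)

/-- `μ₀ʲ` is the population regression coefficient of `x_j` on `x_{-j}`
(represented as a `p`-vector whose `j`-th entry is zero). -/
def Mu0Spec {Ω : Type} [MeasurableSpace Ω] {p : ℕ} (μ : Measure Ω)
    (x : Ω → Fin p → ℝ) (μ₀ : Fin p → Fin p → ℝ) : Prop :=
  ∀ j, μ₀ j j = 0 ∧ ∀ k, k ≠ j →
    ∫ ω, (x ω j - ∑ l ∈ Finset.univ.erase j, x ω l * μ₀ j l) * x ω k ∂μ = 0

/-- Condition B of the paper: sparsity and rates of the preliminary estimators. -/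
def CondB {Ω : Type} [MeasurableSpace Ω] {p n : ℕ} (μ : Measure Ω)
    [IsProbabilityMeasure μ] (β₀ : Fin p → ℝ) (μ₀ : Fin p → Fin p → ℝ)
    (βhat : (Fin n → Ω) → Fin p → ℝ) (μhat : Fin p → (Fin n → Ω) → Fin p → ℝ)
    (S : Finset (Fin p)) (s : ℕ) (C Δn : ℝ) : Prop :=
  2 ≤ S.card ∧ 1 ≤ s ∧ l0 β₀ ≤ s ∧ (∀ j ∈ S, l0 (μ₀ j) ≤ s) ∧
  ENNReal.ofReal (1 - Δn) ≤
    (Measure.pi fun _ : Fin n => μ) {d |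
      (l1 (fun k => βhat d k - β₀ k) ≤ C * (1 + l2 β₀) * s * Real.sqrt (Real.log p / n)
        ∧ l2 (fun k => βhat d k - β₀ k)
            ≤ C * (1 + l2 β₀) * Real.sqrt s * Real.sqrt (Real.log p / n)
        ∧ (l0 (βhat d) : ℝ) ≤ C * s)
      ∧ ∀ j ∈ S,
        (l1 (fun k => μhat j d k - μ₀ j k)
            ≤ C * (1 + l2 (μ₀ j)) * s * Real.sqrt (Real.log p / n)
          ∧ l2 (fun k => μhat j d k - μ₀ j k)
              ≤ C * (1 + l2 (μ₀ j)) * Real.sqrt s * Real.sqrt (Real.log p / n)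
          ∧ (l0 (μhat j d) : ℝ) ≤ C * s)}

/-- Condition C of the paper: growth restrictions. -/
def CondC {p : ℕ} (n : ℕ) (β₀ : Fin p → ℝ) (μ₀ : Fin p → Fin p → ℝ)
    (S : Finset (Fin p)) (s : ℕ) (C δn : ℝ) : Prop :=
  (∀ j, |β₀ j| ≤ C) ∧
  ∃ m : ℝ, (∀ j ∈ S, l2 (μ₀ j) ≤ m) ∧
    (1 + l2 β₀) * (1 + m) * s * Real.log ((n : ℝ) * p) ≤ δn * Real.sqrt n


/-- **The auxiliary regression is itself an error-in-variables model.**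
In the error-in-variables model `z = x + w` with `w` zero mean, `E[x_j w_k] = 0` for
all `j,k`, and `Γ = E[wwᵀ]` diagonal (so `Γ_{j,-j} = 0`), if `μ₀ʲ` satisfies the
population orthogonality `E[(x_j − x_{-j}ᵀμ₀ʲ)x_{-j}] = 0`, then coordinatewise on
`k ≠ j`:
`E[z_{-j}(z_j − z_{-j}ᵀμ₀ʲ)] = Γ_{j,-j} − Γ_{-j,-j}μ₀ʲ`, and consequently the
corrected moment condition `E[z_{-j}(z_j − z_{-j}ᵀμ₀ʲ) + Γ_{-j,-j}μ₀ʲ] = 0` holds. -/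
theorem auxiliary_regression_eiv
    {Ω : Type} [MeasurableSpace Ω] (μ : Measure Ω) [IsProbabilityMeasure μ]
    {p : ℕ} (x w : Ω → Fin p → ℝ) (Γm : Matrix (Fin p) (Fin p) ℝ)
    (j : Fin p) (μ₀ : Fin p → ℝ)
    -- integrability of all second moments involved
    (hix : ∀ k l, Integrable (fun ω => x ω k * x ω l) μ)
    (hixw : ∀ k l, Integrable (fun ω => x ω k * w ω l) μ)
    (hiw : ∀ k l, Integrable (fun ω => w ω k * w ω l) μ)
    -- zero-mean measurement error, orthogonal to the signal
    (hw0 : ∀ k, ∫ ω, w ω k ∂μ = 0)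
    (hxw : ∀ k l, ∫ ω, x ω k * w ω l ∂μ = 0)
    -- Γ = E[wwᵀ], diagonal
    (hΓ : ∀ k l, Γm k l = ∫ ω, w ω k * w ω l ∂μ)
    (hdiag : ∀ k l, k ≠ l → Γm k l = 0)
    -- μ₀ʲ is the population regression coefficient of x_j on x_{-j}
    (hμj : μ₀ j = 0)
    (horth : ∀ k, k ≠ j →
      ∫ ω, (x ω j - ∑ l ∈ Finset.univ.erase j, x ω l * μ₀ l) * x ω k ∂μ = 0) :
    ∀ k, k ≠ j →
      ((∫ ω, zval x w ω k *
          (zval x w ω j - ∑ l ∈ Finset.univ.erase j, zval x w ω l * μ₀ l) ∂μ)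
        = Γm k j - ∑ l ∈ Finset.univ.erase j, Γm k l * μ₀ l)
      ∧ ((∫ ω, zval x w ω k *
            (zval x w ω j - ∑ l ∈ Finset.univ.erase j, zval x w ω l * μ₀ l) ∂μ)
          + ∑ l ∈ Finset.univ.erase j, Γm k l * μ₀ l = 0) := by
  intro k hk
  have I1 : Integrable (fun ω => (x ω j - ∑ l ∈ Finset.univ.erase j, x ω l * μ₀ l) * x ω k) μ := by
    have h : Integrable (fun ω => x ω j * x ω k
        - ∑ l ∈ Finset.univ.erase j, μ₀ l * (x ω l * x ω k)) μ :=
      (hix j k).sub (integrable_finset_sum (Finset.univ.erase j)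
        (fun l _ => ((hix l k).const_mul (μ₀ l))))
    refine h.congr (Filter.Eventually.of_forall fun ω => ?_)
    dsimp only
    rw [sub_mul, Finset.sum_mul]
    congr 1
    exact Finset.sum_congr rfl fun l _ => by ring
  have I2 : Integrable (fun ω => x ω k * w ω j - ∑ l ∈ Finset.univ.erase j, x ω k * w ω l * μ₀ l) μ :=
    (hixw k j).sub (integrable_finset_sum _ fun l _ => ((hixw k l).mul_const (μ₀ l)))
  have I3 : Integrable (fun ω => w ω k * x ω j - ∑ l ∈ Finset.univ.erase j, w ω k * x ω l * μ₀ l) μ := by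
    refine Integrable.sub ?_ (integrable_finset_sum _ fun l _ => Integrable.mul_const ?_ (μ₀ l))
    · exact (hixw j k).congr (Filter.Eventually.of_forall fun ω => mul_comm _ _)
    · exact (hixw l k).congr (Filter.Eventually.of_forall fun ω => mul_comm _ _)
  have I4 : Integrable (fun ω => w ω k * w ω j - ∑ l ∈ Finset.univ.erase j, w ω k * w ω l * μ₀ l) μ :=
    (hiw k j).sub (integrable_finset_sum _ fun l _ => ((hiw k l).mul_const (μ₀ l)))
  have hpt : ∀ ω, zval x w ω k *
      (zval x w ω j - ∑ l ∈ Finset.univ.erase j, zval x w ω l * μ₀ l)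
      = ((x ω j - ∑ l ∈ Finset.univ.erase j, x ω l * μ₀ l) * x ω k)
        + ((x ω k * w ω j - ∑ l ∈ Finset.univ.erase j, x ω k * w ω l * μ₀ l)
        + ((w ω k * x ω j - ∑ l ∈ Finset.univ.erase j, w ω k * x ω l * μ₀ l)
        + (w ω k * w ω j - ∑ l ∈ Finset.univ.erase j, w ω k * w ω l * μ₀ l))) := by
    intro ω
    simp only [zval]
    have h1 : ∑ l ∈ Finset.univ.erase j, (x ω l + w ω l) * μ₀ l
        = (∑ l ∈ Finset.univ.erase j, x ω l * μ₀ l)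
          + ∑ l ∈ Finset.univ.erase j, w ω l * μ₀ l := by
      rw [← Finset.sum_add_distrib]
      exact Finset.sum_congr rfl fun l _ => by ring
    have h2 : ∑ l ∈ Finset.univ.erase j, x ω k * w ω l * μ₀ l
        = x ω k * ∑ l ∈ Finset.univ.erase j, w ω l * μ₀ l := by
      rw [Finset.mul_sum]; exact Finset.sum_congr rfl fun l _ => by ring
    have h3 : ∑ l ∈ Finset.univ.erase j, w ω k * x ω l * μ₀ l
        = w ω k * ∑ l ∈ Finset.univ.erase j, x ω l * μ₀ l := by
      rw [Finset.mul_sum]; exact Finset.sum_congr rfl fun l _ => by ring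
    have h4 : ∑ l ∈ Finset.univ.erase j, w ω k * w ω l * μ₀ l
        = w ω k * ∑ l ∈ Finset.univ.erase j, w ω l * μ₀ l := by
      rw [Finset.mul_sum]; exact Finset.sum_congr rfl fun l _ => by ring
    rw [h1, h2, h3, h4]
    ring
  have key : (∫ ω, zval x w ω k *
      (zval x w ω j - ∑ l ∈ Finset.univ.erase j, zval x w ω l * μ₀ l) ∂μ)
      = Γm k j - ∑ l ∈ Finset.univ.erase j, Γm k l * μ₀ l := by
    simp only [hpt]
    have I34 : Integrable (fun ω => (w ω k * x ω j - ∑ l ∈ Finset.univ.erase j, w ω k * x ω l * μ₀ l)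
        + (w ω k * w ω j - ∑ l ∈ Finset.univ.erase j, w ω k * w ω l * μ₀ l)) μ := I3.add I4
    have I234 : Integrable (fun ω => (x ω k * w ω j - ∑ l ∈ Finset.univ.erase j, x ω k * w ω l * μ₀ l)
        + ((w ω k * x ω j - ∑ l ∈ Finset.univ.erase j, w ω k * x ω l * μ₀ l)
        + (w ω k * w ω j - ∑ l ∈ Finset.univ.erase j, w ω k * w ω l * μ₀ l))) μ := I2.add I34
    rw [integral_add I1 I234, integral_add I2 I34, integral_add I3 I4]
    have e1 : (∫ ω, (x ω j - ∑ l ∈ Finset.univ.erase j, x ω l * μ₀ l) * x ω k ∂μ) = 0 :=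
      horth k hk
    have e2 : (∫ ω, (x ω k * w ω j - ∑ l ∈ Finset.univ.erase j, x ω k * w ω l * μ₀ l) ∂μ) = 0 := by
      rw [integral_sub (hixw k j) (integrable_finset_sum _ fun l _ => ((hixw k l).mul_const (μ₀ l))),
        integral_finset_sum _ fun l _ => ((hixw k l).mul_const (μ₀ l)), hxw k j]
      simp only [integral_mul_const, hxw, zero_mul, Finset.sum_const_zero, sub_zero]
    have e3 : (∫ ω, (w ω k * x ω j - ∑ l ∈ Finset.univ.erase j, w ω k * x ω l * μ₀ l) ∂μ) = 0 := by
      have c : ∀ ω, w ω k * x ω j - ∑ l ∈ Finset.univ.erase j, w ω k * x ω l * μ₀ l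
          = x ω j * w ω k - ∑ l ∈ Finset.univ.erase j, x ω l * w ω k * μ₀ l := by
        intro ω
        rw [mul_comm (w ω k) (x ω j)]
        congr 1
        exact Finset.sum_congr rfl fun l _ => by ring
      simp only [c]
      rw [integral_sub (hixw j k) (integrable_finset_sum _ fun l _ => ((hixw l k).mul_const (μ₀ l))),
        integral_finset_sum _ fun l _ => ((hixw l k).mul_const (μ₀ l)), hxw j k]
      simp only [integral_mul_const, hxw, zero_mul, Finset.sum_const_zero, sub_zero]
    have e4 : (∫ ω, (w ω k * w ω j - ∑ l ∈ Finset.univ.erase j, w ω k * w ω l * μ₀ l) ∂μ)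
        = Γm k j - ∑ l ∈ Finset.univ.erase j, Γm k l * μ₀ l := by
      rw [integral_sub (hiw k j) (integrable_finset_sum _ fun l _ => ((hiw k l).mul_const (μ₀ l))),
        integral_finset_sum _ fun l _ => ((hiw k l).mul_const (μ₀ l)), ← hΓ k j]
      congr 1
      exact Finset.sum_congr rfl fun l _ => by rw [integral_mul_const, ← hΓ k l]
    rw [e1, e2, e3, e4]; ring
  refine ⟨key, ?_⟩
  rw [key, hdiag k j hk]; ring
end EIV
end
end

section
/- For the score function ψ_j(y,z,θ,ηʲ) = (eʲ − μʲ)ᵀ{z(y − z_jθ − z_{-j}ᵀβ_{-j}) + Γ(θeʲ + β_{-j})} with nuisance parameter ηʲ = (β_{-j}, μʲ), if μ₀ʲ solves J_{j,-j} − (μ₀ʲ)ᵀJ_{-j,-j} = 0 where J = E[zzᵀ] − Γ = E[xxᵀ], then at η₀ʲ = (β₀,₋ⱼ, μ₀ʲ) the orthogonality condition holds: the derivative of ηʲ ↦ E[ψ_j(y, z, β₀ⱼ, ηʲ)] with respect to ηʲ, evaluated at η₀ʲ, is zero (both the gradient in β_{-j} and the gradient in μʲ vanish). -/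
open MeasureTheory ProbabilityTheory Finset Filter

noncomputable section

namespace EIV

/-- If `F t = F 0 + t • g` pointwise with `g` integrable of zero mean, then
`t ↦ ∫ F t` has zero derivative everywhere (in particular at `0`). -/
lemma hasDerivAt_zero_of_affine {Ω : Type} [MeasurableSpace Ω] (μ : Measure Ω)
    (F : ℝ → Ω → ℝ) (g : Ω → ℝ)
    (hdec : ∀ t ω, F t ω = F 0 ω + t * g ω)
    (hg : Integrable g μ) (hg0 : ∫ ω, g ω ∂μ = 0) :
    HasDerivAt (fun t => ∫ ω, F t ω ∂μ) 0 0 := by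
  have hconst : (fun t => ∫ ω, F t ω ∂μ) = fun _ => ∫ ω, F 0 ω ∂μ := by
    funext t
    by_cases h0 : Integrable (F 0) μ
    · have h1 : (fun ω => F t ω) = fun ω => F 0 ω + t * g ω := funext (hdec t)
      rw [h1, integral_add h0 (hg.const_mul t), integral_const_mul, hg0, mul_zero, add_zero]
    · have h1 : ¬ Integrable (F t) μ := by
        intro h
        apply h0
        have h2 : F 0 = fun ω => F t ω - t * g ω := by
          funext ω; rw [hdec t ω]; ring
        rw [h2]
        exact h.sub (hg.const_mul t)
      rw [integral_undef h1, integral_undef h0]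
  rw [hconst]
  exact hasDerivAt_const 0 _

/-- **Neyman orthogonality of the score.**
For the score `ψ_j(y,z,θ,ηʲ) = (eʲ−μʲ)ᵀ{z(y − z_jθ − z_{-j}ᵀβ_{-j}) + Γ(θeʲ+β_{-j})}`
with nuisance parameter `ηʲ = (β_{-j}, μʲ)`, if `μ₀ʲ` solves
`J_{j,-j} − (μ₀ʲ)ᵀJ_{-j,-j} = 0` with `J = E[zzᵀ] − Γ = E[xxᵀ]`, then at
`η₀ʲ = (β₀,₋ⱼ, μ₀ʲ)` the map `ηʲ ↦ E[ψ_j(y,z,β₀ⱼ,ηʲ)]` has vanishing derivative in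
every nuisance direction: both the gradient in `β_{-j}` and the gradient in `μʲ`
are zero. -/
theorem score_orthogonality
    {Ω : Type} [MeasurableSpace Ω] (μ : Measure Ω) [IsProbabilityMeasure μ]
    {p : ℕ} (x w : Ω → Fin p → ℝ) (ξ : Ω → ℝ) (β₀ : Fin p → ℝ)
    (j : Fin p) (μ₀ : Fin p → ℝ)
    -- integrability of all second moments involved
    (hix : ∀ k l, Integrable (fun ω => x ω k * x ω l) μ)
    (hixw : ∀ k l, Integrable (fun ω => x ω k * w ω l) μ)
    (hiw : ∀ k l, Integrable (fun ω => w ω k * w ω l) μ)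
    (hixξ : ∀ k, Integrable (fun ω => x ω k * ξ ω) μ)
    (hiwξ : ∀ k, Integrable (fun ω => w ω k * ξ ω) μ)
    (hiξ : Integrable ξ μ) (hiξ2 : Integrable (fun ω => ξ ω ^ 2) μ)
    -- model: zero means and orthogonality of the errors
    (hw0 : ∀ k, ∫ ω, w ω k ∂μ = 0)
    (hxξ : ∀ k, ∫ ω, x ω k * ξ ω ∂μ = 0)
    (hwξ : ∀ k, ∫ ω, w ω k * ξ ω ∂μ = 0)
    (hxw : ∀ k l, ∫ ω, x ω k * w ω l ∂μ = 0)
    -- Γ = cov(w) diagonal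
    (hdiag : ∀ k l, k ≠ l → ∫ ω, w ω k * w ω l ∂μ = 0)
    -- μ₀ʲ has j-th coordinate zero and solves J_{j,-j} − (μ₀ʲ)ᵀJ_{-j,-j} = 0,
    -- where J = E[xxᵀ]
    (hμj : μ₀ j = 0)
    (hJ : ∀ k, k ≠ j →
      (∫ ω, x ω j * x ω k ∂μ)
        - ∑ l ∈ Finset.univ.erase j, μ₀ l * ∫ ω, x ω l * x ω k ∂μ = 0) :
    ∀ k, k ≠ j →
      -- derivative in the direction of the k-th coordinate of β_{-j} vanishes
      HasDerivAt (fun t : ℝ =>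
          ∫ ω, score (Γv μ w) j (yval x ξ β₀ ω) (zval x w ω) (β₀ j)
            (Function.update β₀ k (β₀ k + t)) μ₀ ∂μ) 0 0
      -- derivative in the direction of the k-th coordinate of μʲ vanishes
      ∧ HasDerivAt (fun t : ℝ =>
          ∫ ω, score (Γv μ w) j (yval x ξ β₀ ω) (zval x w ω) (β₀ j)
            β₀ (Function.update μ₀ k (μ₀ k + t)) ∂μ) 0 0 := by
  intro k hk
  have hk' : k ∈ Finset.univ.erase j := Finset.mem_erase.mpr ⟨hk, Finset.mem_univ k⟩
  -- integrability of z·z products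
  have hzzfun : ∀ m l : Fin p, (fun ω => zval x w ω m * zval x w ω l)
      = fun ω => x ω m * x ω l + (x ω m * w ω l + (x ω l * w ω m + w ω m * w ω l)) := by
    intro m l; funext ω; simp only [zval]; ring
  have hizz : ∀ m l, Integrable (fun ω => zval x w ω m * zval x w ω l) μ := by
    intro m l
    rw [hzzfun m l]
    exact (hix m l).add ((hixw m l).add ((hixw l m).add (hiw m l)))
  have hwsq : ∀ m : Fin p, (∫ ω, w ω m * w ω m ∂μ) = Γv μ w m := by
    intro m; simp only [Γv]; congr 1; funext ω; ring
  have hIzz : ∀ m l, (∫ ω, zval x w ω m * zval x w ω l ∂μ)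
      = (∫ ω, x ω m * x ω l ∂μ) + (if m = l then Γv μ w m else 0) := by
    intro m l
    have ha : Integrable (fun ω => x ω l * w ω m + w ω m * w ω l) μ := (hixw l m).add (hiw m l)
    have hb : Integrable (fun ω => x ω m * w ω l + (x ω l * w ω m + w ω m * w ω l)) μ :=
      (hixw m l).add ha
    rw [hzzfun m l, integral_add (hix m l) hb, integral_add (hixw m l) ha,
      integral_add (hixw l m) (hiw m l), hxw m l, hxw l m]
    rcases eq_or_ne m l with rfl | h
    · rw [if_pos rfl, hwsq]; ring
    · rw [if_neg h, hdiag m l h]; ring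
  constructor
  · -- derivative in the β direction
    set g : Ω → ℝ := fun ω => ∑ m : Fin p, ((if m = j then (1:ℝ) else 0) - μ₀ m) *
        (-(zval x w ω m * zval x w ω k) + Γv μ w m * (if m = k then 1 else 0)) with hgdef
    have hgint : Integrable g μ := by
      apply integrable_finset_sum
      intro m _
      exact (((hizz m k).neg.add (integrable_const _)).const_mul _)
    have key : ∀ t ω, score (Γv μ w) j (yval x ξ β₀ ω) (zval x w ω) (β₀ j)
        (Function.update β₀ k (β₀ k + t)) μ₀
        = score (Γv μ w) j (yval x ξ β₀ ω) (zval x w ω) (β₀ j) β₀ μ₀ + t * g ω := by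
      intro t ω
      have hS : (∑ l ∈ Finset.univ.erase j, zval x w ω l * Function.update β₀ k (β₀ k + t) l)
          = (∑ l ∈ Finset.univ.erase j, zval x w ω l * β₀ l) + t * zval x w ω k := by
        have hcongr : ∀ l ∈ Finset.univ.erase j,
            zval x w ω l * Function.update β₀ k (β₀ k + t) l
            = zval x w ω l * β₀ l + (if l = k then t * zval x w ω l else 0) := by
          intro l _
          rw [Function.update_apply]
          rcases eq_or_ne l k with rfl | h
          · simp; ring
          · simp [h]
        rw [Finset.sum_congr rfl hcongr, Finset.sum_add_distrib,
          Finset.sum_ite_eq' _ k (fun l => t * zval x w ω l), if_pos hk']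
      simp only [score, hgdef]
      rw [hS, Finset.mul_sum, ← Finset.sum_add_distrib]
      refine Finset.sum_congr rfl fun m _ => ?_
      by_cases hmj : m = j
      · subst hmj
        simp only [if_pos rfl, if_neg (Ne.symm hk), if_true, eq_self_iff_true]
        ring
      · by_cases hmk : m = k
        · subst hmk
          simp only [if_neg hmj, Function.update_apply, if_pos rfl, if_true, eq_self_iff_true]
          ring
        · simp only [if_neg hmj, if_neg hmk, Function.update_apply]
          ring
    refine hasDerivAt_zero_of_affine μ _ g (fun t ω => by rw [key t ω, key 0 ω]; ring) hgint ?_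
    -- ∫ g = 0
    have hterm : ∀ m : Fin p,
        (∫ ω, ((if m = j then (1:ℝ) else 0) - μ₀ m) *
          (-(zval x w ω m * zval x w ω k) + Γv μ w m * (if m = k then 1 else 0)) ∂μ)
        = ((if m = j then (1:ℝ) else 0) - μ₀ m) * (-(∫ ω, x ω m * x ω k ∂μ)) := by
      intro m
      have hA : Integrable (fun ω => -(zval x w ω m * zval x w ω k)) μ := (hizz m k).neg
      rw [integral_const_mul, integral_add hA (integrable_const _),
        integral_neg, hIzz m k, integral_const]
      rcases eq_or_ne m k with rfl | hmk
      · simp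
      · simp [hmk]
    simp only [hgdef]
    rw [integral_finset_sum _
      (fun m _ => show Integrable (fun ω => ((if m = j then (1:ℝ) else 0) - μ₀ m) *
          (-(zval x w ω m * zval x w ω k) + Γv μ w m * (if m = k then 1 else 0))) μ from
        (((hizz m k).neg.add (integrable_const _)).const_mul _)),
      Finset.sum_congr rfl (fun m _ => hterm m)]
    have hsplit : ∀ m : Fin p,
        ((if m = j then (1:ℝ) else 0) - μ₀ m) * (-(∫ ω, x ω m * x ω k ∂μ))
        = -(if m = j then (∫ ω, x ω m * x ω k ∂μ) else 0)
          + μ₀ m * ∫ ω, x ω m * x ω k ∂μ := by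
      intro m
      rcases eq_or_ne m j with rfl | h
      · simp; ring
      · simp [h]
    rw [Finset.sum_congr rfl (fun m _ => hsplit m), Finset.sum_add_distrib,
      Finset.sum_neg_distrib, Finset.sum_ite_eq' _ j
        (fun m => ∫ ω, x ω m * x ω k ∂μ), if_pos (Finset.mem_univ j)]
    have herase : (∑ l ∈ Finset.univ.erase j, μ₀ l * ∫ ω, x ω l * x ω k ∂μ)
        + μ₀ j * ∫ ω, x ω j * x ω k ∂μ
        = ∑ m : Fin p, μ₀ m * ∫ ω, x ω m * x ω k ∂μ :=
      Finset.sum_erase_add _ _ (Finset.mem_univ j)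
    have h1 := hJ k hk
    rw [hμj] at herase
    linarith [herase, h1]
  · -- derivative in the μ direction
    set g : Ω → ℝ := fun ω =>
      -(zval x w ω k * (ξ ω - ∑ l : Fin p, w ω l * β₀ l) + Γv μ w k * β₀ k) with hgdef
    have hgfun : g = fun ω => -(x ω k * ξ ω) + (-(w ω k * ξ ω)
        + ((∑ l : Fin p, β₀ l * (x ω k * w ω l + w ω k * w ω l)) + (-(Γv μ w k * β₀ k)))) := by
      funext ω
      have hsum : (∑ l : Fin p, β₀ l * (x ω k * w ω l + w ω k * w ω l))
          = (x ω k + w ω k) * ∑ l : Fin p, w ω l * β₀ l := by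
        rw [Finset.mul_sum]
        exact Finset.sum_congr rfl fun l _ => by ring
      simp only [hgdef, zval]
      rw [hsum]
      ring
    have hgint : Integrable g μ := by
      rw [hgfun]
      exact (hixξ k).neg.add ((hiwξ k).neg.add
        ((integrable_finset_sum _ fun l _ => ((hixw k l).add (hiw k l)).const_mul _).add
          (integrable_const _)))
    have hY : ∀ ω, yval x ξ β₀ ω - zval x w ω j * β₀ j
        - ∑ l ∈ Finset.univ.erase j, zval x w ω l * β₀ l
        = ξ ω - ∑ l : Fin p, w ω l * β₀ l := by
      intro ω
      have h1 : (∑ l ∈ Finset.univ.erase j, zval x w ω l * β₀ l) + zval x w ω j * β₀ j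
          = ∑ l : Fin p, zval x w ω l * β₀ l :=
        Finset.sum_erase_add _ _ (Finset.mem_univ j)
      have h2 : (∑ l : Fin p, zval x w ω l * β₀ l)
          = (∑ l : Fin p, x ω l * β₀ l) + ∑ l : Fin p, w ω l * β₀ l := by
        rw [← Finset.sum_add_distrib]
        exact Finset.sum_congr rfl fun l _ => by simp only [zval]; ring
      simp only [yval]
      linarith
    have key : ∀ t ω, score (Γv μ w) j (yval x ξ β₀ ω) (zval x w ω) (β₀ j)
        β₀ (Function.update μ₀ k (μ₀ k + t))
        = score (Γv μ w) j (yval x ξ β₀ ω) (zval x w ω) (β₀ j) β₀ μ₀ + t * g ω := by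
      intro t ω
      simp only [score, hgdef]
      have hcongr : ∀ m : Fin p,
          ((if m = j then (1:ℝ) else 0) - Function.update μ₀ k (μ₀ k + t) m) *
            (zval x w ω m * (yval x ξ β₀ ω - zval x w ω j * β₀ j
              - ∑ l ∈ Finset.univ.erase j, zval x w ω l * β₀ l)
              + Γv μ w m * (if m = j then β₀ j else β₀ m))
          = ((if m = j then (1:ℝ) else 0) - μ₀ m) *
            (zval x w ω m * (yval x ξ β₀ ω - zval x w ω j * β₀ j
              - ∑ l ∈ Finset.univ.erase j, zval x w ω l * β₀ l)
              + Γv μ w m * (if m = j then β₀ j else β₀ m))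
          + (if m = k then
              -(t * (zval x w ω m * (yval x ξ β₀ ω - zval x w ω j * β₀ j
                - ∑ l ∈ Finset.univ.erase j, zval x w ω l * β₀ l)
                + Γv μ w m * (if m = j then β₀ j else β₀ m))) else 0) := by
        intro m
        rw [Function.update_apply]
        by_cases h : m = k
        · subst h
          simp only [if_pos rfl, if_true, eq_self_iff_true]
          ring
        · simp only [if_neg h]; ring
      rw [Finset.sum_congr rfl (fun m _ => hcongr m), Finset.sum_add_distrib,
        Finset.sum_ite_eq' _ k, if_pos (Finset.mem_univ k), if_neg hk, hY ω]
      ring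
    refine hasDerivAt_zero_of_affine μ _ g (fun t ω => by rw [key t ω, key 0 ω]; ring) hgint ?_
    have hisum : Integrable (fun ω => ∑ l : Fin p, β₀ l * (x ω k * w ω l + w ω k * w ω l)) μ :=
      integrable_finset_sum _ fun l _ => ((hixw k l).add (hiw k l)).const_mul _
    have hi3 : Integrable (fun ω => (∑ l : Fin p, β₀ l * (x ω k * w ω l + w ω k * w ω l))
        + (-(Γv μ w k * β₀ k))) μ := hisum.add (integrable_const _)
    have hi2 : Integrable (fun ω => -(w ω k * ξ ω)) μ := (hiwξ k).neg
    have hi1 : Integrable (fun ω => -(x ω k * ξ ω)) μ := (hixξ k).neg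
    have hi23 : Integrable (fun ω => -(w ω k * ξ ω)
        + ((∑ l : Fin p, β₀ l * (x ω k * w ω l + w ω k * w ω l)) + (-(Γv μ w k * β₀ k)))) μ :=
      hi2.add hi3
    rw [hgfun, integral_add hi1 hi23, integral_add hi2 hi3,
      integral_add hisum (integrable_const _),
      integral_finset_sum _ (fun l _ => show Integrable
          (fun ω => β₀ l * (x ω k * w ω l + w ω k * w ω l)) μ from
        ((hixw k l).add (hiw k l)).const_mul _),
      integral_neg, integral_neg, hxξ k, hwξ k, integral_const]
    have hterm : ∀ l : Fin p,
        (∫ ω, β₀ l * (x ω k * w ω l + w ω k * w ω l) ∂μ)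
        = (if k = l then Γv μ w k * β₀ k else 0) := by
      intro l
      rw [integral_const_mul, integral_add (hixw k l) (hiw k l), hxw k l]
      rcases eq_or_ne k l with rfl | h
      · rw [if_pos rfl, hwsq]; ring
      · rw [if_neg h, hdiag k l h]; ring
    rw [Finset.sum_congr rfl (fun l _ => hterm l),
      Finset.sum_ite_eq _ k (fun _ => Γv μ w k * β₀ k), if_pos (Finset.mem_univ k)]
    simp
end EIV
end
end

section
/- Let X_i, i = 1,…,n, be independent random vectors in ℝᵖ with p ≥ 3, define m̄_k := max_{j≤p} (1/n)Σ_{i=1}^n E[|X_{ij}|^k] and let M_k ≥ E[max_{i≤n} ‖X_i‖_∞^k]. Then there is a universal constant C such that: (1) E[max_{j≤p} (1/n)|Σ_{i=1}^n (|X_{ij}|^k − E[|X_{ij}|^k])|] ≤ 2C²(log p / n)M_k + 2C√(log p / n) M_k^{1/2} m̄_k^{1/2}; and (2) E[max_{j≤p} (1/n)Σ_{i=1}^n |X_{ij}|^k] ≤ C M_k n⁻¹ log p + C m̄_k. -/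
open MeasureTheory ProbabilityTheory Finset Filter

noncomputable section

lemma exp_le_one_add_sq {x : ℝ} (hx : |x| ≤ 1) : Real.exp x ≤ 1 + x + x ^ 2 := by
  rcases le_or_gt x 0 with h | h
  · have h1 : 0 < 1 - x := by linarith
    have h2 : Real.exp (-x) ≥ 1 - x := by
      have := Real.add_one_le_exp (-x); linarith
    have h3 : Real.exp x = (Real.exp (-x))⁻¹ := by
      rw [← Real.exp_neg, neg_neg]
    have h4 : Real.exp x ≤ (1 - x)⁻¹ := by
      rw [h3]
      exact inv_anti₀ h1 h2
    have h5 : (1 - x)⁻¹ ≤ 1 + x + x ^ 2 := by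
      rw [inv_le_iff_one_le_mul₀ h1]
      nlinarith
    linarith
  · have hx1 : x ≤ 1 := by have := abs_le.mp hx; exact this.2
    have := Real.exp_bound' h.le hx1 (n := 2) (by norm_num)
    simp [Finset.sum_range_succ, Nat.factorial] at this
    nlinarith

lemma sqrt_mul_le_half_add {x y : ℝ} (hx : 0 ≤ x) (hy : 0 ≤ y) :
    Real.sqrt (x * y) ≤ (x + y) / 2 := by
  have h1 := Real.sq_sqrt hx
  have h2 := Real.sq_sqrt hy
  have h3 := Real.sqrt_nonneg x
  have h4 := Real.sqrt_nonneg y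
  have h5 : Real.sqrt (x * y) = Real.sqrt x * Real.sqrt y := Real.sqrt_mul hx y
  nlinarith [sq_nonneg (Real.sqrt x - Real.sqrt y)]

lemma integrable_of_bound {Ω : Type*} [MeasurableSpace Ω] {μ : Measure Ω}
    [IsProbabilityMeasure μ] {f : Ω → ℝ} (hf : Measurable f) (R : ℝ)
    (hb : ∀ ω, |f ω| ≤ R) : Integrable f μ := by
  refine (integrable_const R).mono' hf.aestronglyMeasurable ?_
  filter_upwards with ω
  simpa using hb ω

lemma mgf_factor {Ω : Type*} [MeasurableSpace Ω] {μ : Measure Ω} [IsProbabilityMeasure μ]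
    {W : Ω → ℝ} (hW : Measurable W) {u v lam : ℝ} (hu : 0 < u)
    (hWb : ∀ ω, |W ω| ≤ u) (hW0 : ∫ ω, W ω ∂μ = 0)
    (hW2 : ∫ ω, (W ω) ^ 2 ∂μ ≤ v) (hlam : |lam| * u ≤ 1) :
    mgf W μ lam ≤ Real.exp (lam ^ 2 * v) := by
  have hWint : Integrable W μ := integrable_of_bound hW u fun ω => hWb ω
  have hW2int : Integrable (fun ω => (W ω) ^ 2) μ := by
    refine integrable_of_bound (hW.pow_const 2) (u ^ 2) fun ω => ?_
    rw [abs_pow]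
    exact pow_le_pow_left₀ (abs_nonneg _) (hWb ω) 2
  have hpt : ∀ ω, Real.exp (lam * W ω) ≤ 1 + lam * W ω + (lam * W ω) ^ 2 := by
    intro ω
    refine exp_le_one_add_sq ?_
    rw [abs_mul]
    calc |lam| * |W ω| ≤ |lam| * u := by
          exact mul_le_mul_of_nonneg_left (hWb ω) (abs_nonneg _)
      _ ≤ 1 := hlam
  have hint2 : Integrable (fun ω => 1 + lam * W ω + lam ^ 2 * (W ω) ^ 2) μ :=
    ((integrable_const 1).add (hWint.const_mul lam)).add (hW2int.const_mul _)
  have h1 : mgf W μ lam ≤ ∫ ω, (1 + lam * W ω + lam ^ 2 * (W ω) ^ 2) ∂μ := by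
    refine integral_mono_of_nonneg ?_ hint2 ?_
    · filter_upwards with ω; positivity
    · filter_upwards with ω
      calc Real.exp (lam * W ω) ≤ 1 + lam * W ω + (lam * W ω) ^ 2 := hpt ω
        _ = 1 + lam * W ω + lam ^ 2 * (W ω) ^ 2 := by ring
  have ha : Integrable (fun ω => 1 + lam * W ω) μ :=
    (integrable_const 1).add (hWint.const_mul lam)
  have hb : Integrable (fun ω => lam ^ 2 * (W ω) ^ 2) μ := hW2int.const_mul _
  have h2 : ∫ ω, (1 + lam * W ω + lam ^ 2 * (W ω) ^ 2) ∂μ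
      = 1 + lam * ∫ ω, W ω ∂μ + lam ^ 2 * ∫ ω, (W ω) ^ 2 ∂μ := by
    rw [integral_add ha hb,
      integral_add (integrable_const 1) (hWint.const_mul lam),
      integral_const, integral_const_mul, integral_const_mul]
    simp
  have h3 : 1 + lam ^ 2 * v ≤ Real.exp (lam ^ 2 * v) := by
    have := Real.add_one_le_exp (lam ^ 2 * v); linarith
  have h4 : lam ^ 2 * ∫ ω, (W ω) ^ 2 ∂μ ≤ lam ^ 2 * v :=
    mul_le_mul_of_nonneg_left hW2 (sq_nonneg _)
  rw [h2, hW0] at h1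
  simp only [mul_zero, add_zero] at h1
  linarith

lemma esup_abs_le {Ω : Type*} [MeasurableSpace Ω] {μ : Measure Ω} [IsProbabilityMeasure μ]
    {p : ℕ} (hpne : (univ : Finset (Fin p)).Nonempty)
    (S : Fin p → Ω → ℝ) (hSmeas : ∀ j, Measurable (S j)) (R : ℝ)
    (hSb : ∀ j ω, |S j ω| ≤ R)
    {lam β : ℝ} (hlam : 0 < lam)
    (hK : ∑ j, (mgf (S j) μ lam + mgf (S j) μ (-lam)) ≤ Real.exp (lam * β)) :
    ∫ ω, univ.sup' hpne (fun j => |S j ω|) ∂μ ≤ β + 1 / lam := by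
  set c : ℝ := (1 / lam) * Real.exp (-(lam * β)) with hc
  have hc0 : 0 ≤ c := by positivity
  set G : Ω → ℝ := fun ω =>
    β + c * ∑ j, (Real.exp (lam * S j ω) + Real.exp (-lam * S j ω)) with hG
  have hexpint : ∀ (d : ℝ), d = lam ∨ d = -lam → ∀ j,
      Integrable (fun ω => Real.exp (d * S j ω)) μ := by
    intro d hd j
    refine integrable_of_bound ((hSmeas j).const_mul d).exp (Real.exp (lam * R)) fun ω => ?_
    rw [abs_of_nonneg (Real.exp_nonneg _)]
    apply Real.exp_le_exp.mpr
    have habs : d * S j ω ≤ lam * |S j ω| := by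
      rcases hd with h | h <;> subst h
      · exact mul_le_mul_of_nonneg_left (le_abs_self _) hlam.le
      · calc -lam * S j ω = lam * (-(S j ω)) := by ring
          _ ≤ lam * |S j ω| := mul_le_mul_of_nonneg_left (neg_le_abs _) hlam.le
    exact habs.trans (mul_le_mul_of_nonneg_left (hSb j ω) hlam.le)
  have hGint : Integrable G μ := by
    refine (integrable_const β).add (Integrable.const_mul ?_ _)
    exact integrable_finset_sum _ fun j _ =>
      (hexpint lam (Or.inl rfl) j).add (hexpint (-lam) (Or.inr rfl) j)
  have hpt : ∀ ω, univ.sup' hpne (fun j => |S j ω|) ≤ G ω := by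
    intro ω
    obtain ⟨j₀, _, hj₀⟩ := Finset.exists_mem_eq_sup' hpne (fun j => |S j ω|)
    rw [hj₀]
    have key : |S j₀ ω| - β ≤ (1 / lam) * Real.exp (lam * (|S j₀ ω| - β)) := by
      have h1 := Real.add_one_le_exp (lam * (|S j₀ ω| - β))
      have h2 : lam * (|S j₀ ω| - β) ≤ Real.exp (lam * (|S j₀ ω| - β)) := by linarith
      calc |S j₀ ω| - β = (lam * (|S j₀ ω| - β)) / lam := by field_simp
        _ ≤ Real.exp (lam * (|S j₀ ω| - β)) / lam := by gcongr
        _ = (1 / lam) * Real.exp (lam * (|S j₀ ω| - β)) := by ring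
    have e1 : Real.exp (lam * (|S j₀ ω| - β))
        = Real.exp (-(lam * β)) * Real.exp (lam * |S j₀ ω|) := by
      rw [← Real.exp_add]; ring_nf
    have e2 : Real.exp (lam * |S j₀ ω|)
        ≤ ∑ j, (Real.exp (lam * S j ω) + Real.exp (-lam * S j ω)) := by
      have hterm : Real.exp (lam * |S j₀ ω|)
          ≤ Real.exp (lam * S j₀ ω) + Real.exp (-lam * S j₀ ω) := by
        rcases abs_cases (S j₀ ω) with ⟨h, _⟩ | ⟨h, _⟩
        · rw [h]; linarith [Real.exp_nonneg (-lam * S j₀ ω)]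
        · rw [h]
          have heq : lam * -S j₀ ω = -lam * S j₀ ω := by ring
          rw [heq]
          linarith [Real.exp_nonneg (lam * S j₀ ω)]
      exact hterm.trans (Finset.single_le_sum
        (f := fun j => Real.exp (lam * S j ω) + Real.exp (-lam * S j ω))
        (fun j _ => by positivity) (mem_univ j₀))
    have : |S j₀ ω| ≤ β + (1 / lam) * Real.exp (lam * (|S j₀ ω| - β)) := by linarith
    refine this.trans ?_
    rw [hG, e1]
    simp only []
    have : (1 / lam) * (Real.exp (-(lam * β)) * Real.exp (lam * |S j₀ ω|))
        = c * Real.exp (lam * |S j₀ ω|) := by rw [hc]; ring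
    rw [← mul_assoc, ← hc]
    exact add_le_add (le_refl β) (mul_le_mul_of_nonneg_left e2 hc0)
  have hnn : ∀ ω, 0 ≤ univ.sup' hpne (fun j => |S j ω|) := by
    intro ω
    obtain ⟨j₀, hj₀mem⟩ := hpne
    exact (abs_nonneg (S j₀ ω)).trans (Finset.le_sup' (f := fun j => |S j ω|) hj₀mem)
  have hmono : ∫ ω, univ.sup' hpne (fun j => |S j ω|) ∂μ ≤ ∫ ω, G ω ∂μ := by
    refine integral_mono_of_nonneg ?_ hGint ?_
    · filter_upwards with ω; exact hnn ω
    · filter_upwards with ω; exact hpt ω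
  have hjint : ∀ j : Fin p,
      Integrable (fun ω => Real.exp (lam * S j ω) + Real.exp (-lam * S j ω)) μ :=
    fun j => (hexpint lam (Or.inl rfl) j).add (hexpint (-lam) (Or.inr rfl) j)
  have hsumint : Integrable
      (fun ω => ∑ j, (Real.exp (lam * S j ω) + Real.exp (-lam * S j ω))) μ :=
    integrable_finset_sum _ fun j _ => hjint j
  have hmul : Integrable
      (fun ω => c * ∑ j, (Real.exp (lam * S j ω) + Real.exp (-lam * S j ω))) μ :=
    hsumint.const_mul c
  have hGval : ∫ ω, G ω ∂μ
      = β + c * ∑ j, (mgf (S j) μ lam + mgf (S j) μ (-lam)) := by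
    rw [hG]
    rw [integral_add (integrable_const β) hmul, integral_const, integral_const_mul]
    rw [integral_finset_sum _ fun j _ => hjint j]
    have hterm : ∀ j : Fin p,
        ∫ ω, (Real.exp (lam * S j ω) + Real.exp (-lam * S j ω)) ∂μ
          = mgf (S j) μ lam + mgf (S j) μ (-lam) := by
      intro j
      rw [integral_add (hexpint lam (Or.inl rfl) j) (hexpint (-lam) (Or.inr rfl) j)]
      rfl
    simp only [hterm]
    simp
  have hfinal : β + c * ∑ j, (mgf (S j) μ lam + mgf (S j) μ (-lam)) ≤ β + 1 / lam := by
    have h1 : c * ∑ j, (mgf (S j) μ lam + mgf (S j) μ (-lam)) ≤ c * Real.exp (lam * β) :=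
      mul_le_mul_of_nonneg_left hK hc0
    have h2 : c * Real.exp (lam * β) = 1 / lam := by
      rw [hc, mul_assoc, ← Real.exp_add]
      simp
    linarith
  linarith [hmono, hGval.le, hGval.ge, hfinal]

lemma prod_one_sub_le_exp {n : ℕ} (q : Fin n → ℝ) (hq0 : ∀ i, 0 ≤ q i)
    (hq1 : ∀ i, q i ≤ 1) : ∏ i, (1 - q i) ≤ Real.exp (-(∑ i, q i)) := by
  have : ∀ i ∈ (univ : Finset (Fin n)), 1 - q i ≤ Real.exp (-(q i)) := by
    intro i _
    have := Real.add_one_le_exp (-(q i)); linarith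
  calc ∏ i, (1 - q i) ≤ ∏ i, Real.exp (-(q i)) :=
        Finset.prod_le_prod (fun i _ => by linarith [hq1 i]) this
    _ = Real.exp (∑ i, -(q i)) := (Real.exp_sum _ _).symm
    _ = Real.exp (-(∑ i, q i)) := by rw [← Finset.sum_neg_distrib]

lemma exp_neg_le_one_sub_half {x : ℝ} (h0 : 0 ≤ x) (h1 : x ≤ 1) :
    Real.exp (-x) ≤ 1 - x / 2 := by
  have h2 : (1 : ℝ) + x ≤ Real.exp x := by have := Real.add_one_le_exp x; linarith
  have h3 : (0 : ℝ) < 1 + x := by linarith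
  have h4 : Real.exp (-x) ≤ (1 + x)⁻¹ := by
    rw [Real.exp_neg]
    exact inv_anti₀ h3 h2
  have h5 : (1 + x)⁻¹ ≤ 1 - x / 2 := by
    rw [inv_le_iff_one_le_mul₀ h3]
    nlinarith
  linarith

lemma quantile_bound {Ω : Type} [MeasurableSpace Ω] {μ : Measure Ω} [IsProbabilityMeasure μ]
    {n : ℕ} (hne : (univ : Finset (Fin n)).Nonempty)
    (Y : Fin n → Ω → ℝ) (hYmeas : ∀ i, Measurable (Y i))
    (hY0 : ∀ i ω, 0 ≤ Y i ω) (hYint : ∀ i, Integrable (Y i) μ)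
    (hYindep : iIndepFun Y μ)
    (Z : Ω → ℝ) (hZ : ∀ ω, Z ω = univ.sup' hne (fun i => Y i ω))
    (hZint : Integrable Z μ) (hM : 0 < ∫ ω, Z ω ∂μ) :
    ∃ u : ℝ, 0 < u ∧ u ≤ 4 * ∫ ω, Z ω ∂μ ∧
      ∑ i, ∫ ω, (if u < Y i ω then Y i ω else 0) ∂μ ≤ 4 * ∫ ω, Z ω ∂μ := by
  classical
  set M₁ : ℝ := ∫ ω, Z ω ∂μ with hM₁
  have hZmeas : Measurable Z := by
    have : Measurable (univ.sup' hne Y) := Finset.measurable_sup' hne fun i _ => hYmeas i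
    have heq : Z = univ.sup' hne Y := by
      funext ω; rw [hZ ω]; simp [Finset.sup'_apply]
    rw [heq]; exact this
  have hZ0 : ∀ ω, 0 ≤ Z ω := by
    intro ω; rw [hZ ω]
    obtain ⟨i₀, hi₀⟩ := hne
    exact (hY0 i₀ ω).trans (Finset.le_sup' (f := fun i => Y i ω) hi₀)
  have hYZ : ∀ i ω, Y i ω ≤ Z ω := by
    intro i ω; rw [hZ ω]
    exact Finset.le_sup' (f := fun i => Y i ω) (mem_univ i)
  -- tail probability sum
  set pt : ℝ → ℝ := fun s => ∑ i, (μ {ω | s < Y i ω}).toReal with hpt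
  have hptanti : ∀ ⦃s s' : ℝ⦄, s ≤ s' → pt s' ≤ pt s := by
    intro s s' hss
    refine Finset.sum_le_sum fun i _ => ?_
    refine ENNReal.toReal_mono (measure_ne_top μ _) (measure_mono fun ω hω => ?_)
    exact lt_of_le_of_lt hss hω
  have hpt0 : ∀ s, 0 ≤ pt s := fun s =>
    Finset.sum_nonneg fun i _ => ENNReal.toReal_nonneg
  set S : Set ℝ := {s : ℝ | 0 ≤ s ∧ pt s ≤ 1 / 2} with hS
  have hbdd : BddBelow S := ⟨0, fun s hs => hs.1⟩
  have hSne : S.Nonempty := by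
    set T : ℝ := ∑ i, ∫ ω, Y i ω ∂μ with hT
    have hT0 : 0 ≤ T := Finset.sum_nonneg fun i _ =>
      integral_nonneg fun ω => hY0 i ω
    have hs₀ : (0:ℝ) < 2 * T + 1 := by linarith
    refine ⟨2 * T + 1, by linarith, ?_⟩
    have hterm : ∀ i, (μ {ω | 2 * T + 1 < Y i ω}).toReal ≤ (∫ ω, Y i ω ∂μ) / (2 * T + 1) := by
      intro i
      have hmar := mul_meas_ge_le_integral_of_nonneg
        (μ := μ) (f := Y i) (Filter.Eventually.of_forall (hY0 i)) (hYint i) (2 * T + 1)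
      have hsub : (μ {ω | 2 * T + 1 < Y i ω}).toReal ≤ (μ {ω | 2 * T + 1 ≤ Y i ω}).toReal :=
        ENNReal.toReal_mono (measure_ne_top μ _)
          (measure_mono (Set.setOf_subset_setOf.mpr fun ω => le_of_lt))
      rw [le_div_iff₀ hs₀]
      calc (μ {ω | 2 * T + 1 < Y i ω}).toReal * (2 * T + 1)
          ≤ (μ {ω | 2 * T + 1 ≤ Y i ω}).toReal * (2 * T + 1) := by
            exact mul_le_mul_of_nonneg_right hsub hs₀.le
        _ = (2 * T + 1) * (μ {ω | 2 * T + 1 ≤ Y i ω}).toReal := by ring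
        _ ≤ ∫ ω, Y i ω ∂μ := hmar
    calc pt (2 * T + 1) ≤ ∑ i, (∫ ω, Y i ω ∂μ) / (2 * T + 1) :=
          Finset.sum_le_sum fun i _ => hterm i
      _ = T / (2 * T + 1) := by rw [← Finset.sum_div]
      _ ≤ 1 / 2 := by rw [div_le_div_iff₀ hs₀ (by norm_num)]; linarith
  set t : ℝ := sInf S with ht
  have ht0 : 0 ≤ t := le_csInf hSne fun s hs => hs.1
  have hup : ∀ s ∈ S, ∀ s', s ≤ s' → s' ∈ S := by
    intro s hs s' hss
    exact ⟨hs.1.trans hss, (hptanti hss).trans hs.2⟩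
  have hptle : ∀ s, t < s → pt s ≤ 1 / 2 := by
    intro s hts
    obtain ⟨x, hxS, hxs⟩ := (csInf_lt_iff hbdd hSne).mp hts
    exact (hup x hxS s hxs.le).2
  -- product formula
  have hprodZ : ∀ s : ℝ, (μ {ω | s < Z ω}).toReal
      = 1 - ∏ i, (1 - (μ {ω | s < Y i ω}).toReal) := by
    intro s
    have hsets : ∀ i, MeasurableSet[(inferInstance : MeasurableSpace ℝ).comap (Y i)]
        {ω | Y i ω ≤ s} := fun i => ⟨Set.Iic s, measurableSet_Iic, rfl⟩
    have hprod := hYindep.meas_iInter hsets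
    have hZc : {ω | s < Z ω}ᶜ = ⋂ i, {ω | Y i ω ≤ s} := by
      ext ω
      simp only [Set.mem_compl_iff, Set.mem_setOf_eq, not_lt, Set.mem_iInter, hZ ω,
        Finset.sup'_le_iff]
      constructor
      · intro h i; exact h i (mem_univ i)
      · intro h i _; exact h i
    have hA : MeasurableSet {ω | s < Z ω} := measurableSet_lt measurable_const hZmeas
    have hadd : (μ {ω | s < Z ω}).toReal + (μ {ω | s < Z ω}ᶜ).toReal = 1 := by
      have h := measure_add_measure_compl (μ := μ) hA
      rw [measure_univ] at h
      have h2 := congrArg ENNReal.toReal h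
      rwa [ENNReal.toReal_add (measure_ne_top μ _) (measure_ne_top μ _),
        ENNReal.toReal_one] at h2
    have htoReal : (μ {ω | s < Z ω}).toReal
        = 1 - (μ (⋂ i, {ω | Y i ω ≤ s})).toReal := by
      rw [← hZc]; linarith
    rw [htoReal, hprod, ENNReal.toReal_prod]
    congr 1
    refine Finset.prod_congr rfl fun i _ => ?_
    have hYc : {ω | Y i ω ≤ s} = {ω | s < Y i ω}ᶜ := by
      ext ω; simp [not_lt]
    have hB : MeasurableSet {ω | s < Y i ω} := measurableSet_lt measurable_const (hYmeas i)
    rw [hYc, measure_compl hB (measure_ne_top μ _), measure_univ,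
      ENNReal.toReal_sub_of_le prob_le_one ENNReal.one_ne_top, ENNReal.toReal_one]
  have hq1 : ∀ (s : ℝ) (i : Fin n), (μ {ω | s < Y i ω}).toReal ≤ 1 := by
    intro s i
    rw [← ENNReal.toReal_one]
    exact ENNReal.toReal_mono ENNReal.one_ne_top prob_le_one
  -- lower bound on μ(Z > s) for s < t
  have hlow : ∀ s, 0 ≤ s → s < t → (1:ℝ)/3 ≤ (μ {ω | s < Z ω}).toReal := by
    intro s hs0 hst
    have hnotS : s ∉ S := fun hsS => absurd (csInf_le hbdd hsS) (not_le.mpr hst)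
    have h12 : 1 / 2 < pt s := by
      by_contra h
      exact hnotS ⟨hs0, le_of_not_gt h⟩
    have hexp : ∏ i, (1 - (μ {ω | s < Y i ω}).toReal) ≤ Real.exp (-(pt s)) :=
      prod_one_sub_le_exp _ (fun i => ENNReal.toReal_nonneg) (hq1 s)
    have hexp2 : Real.exp (-(pt s)) ≤ Real.exp (-(1/2 : ℝ)) := by
      apply Real.exp_le_exp.mpr; linarith
    have hexp3 : Real.exp (-(1/2 : ℝ)) ≤ 2/3 := by
      have h32 : (3:ℝ)/2 ≤ Real.exp (1/2) := by
        have := Real.add_one_le_exp (1/2 : ℝ); linarith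
      rw [Real.exp_neg]
      calc (Real.exp (1/2))⁻¹ ≤ ((3:ℝ)/2)⁻¹ := inv_anti₀ (by norm_num) h32
        _ = 2/3 := by norm_num
    rw [hprodZ s]
    linarith
  -- t ≤ 3 M₁
  have hlayerZ : ENNReal.ofReal M₁ = ∫⁻ s in Set.Ioi 0, μ {ω | s < Z ω} := by
    rw [hM₁, ofReal_integral_eq_lintegral_ofReal hZint
      (Filter.Eventually.of_forall hZ0)]
    exact lintegral_eq_lintegral_meas_lt μ (Filter.Eventually.of_forall hZ0)
      hZmeas.aemeasurable
  have htM : t ≤ 3 * M₁ := by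
    rcases le_or_gt t 0 with h | h
    · linarith
    · have hlb : ENNReal.ofReal (1/3 * t) ≤ ENNReal.ofReal M₁ := by
        calc ENNReal.ofReal (1/3 * t)
            = ENNReal.ofReal (1/3) * volume (Set.Ioo 0 t) := by
              rw [Real.volume_Ioo, ← ENNReal.ofReal_mul (by norm_num)]
              norm_num
          _ = ∫⁻ _ in Set.Ioo 0 t, ENNReal.ofReal (1/3) ∂volume := by
              rw [setLIntegral_const]
          _ ≤ ∫⁻ s in Set.Ioo 0 t, μ {ω | s < Z ω} ∂volume := by
              refine setLIntegral_mono' measurableSet_Ioo fun s hs => ?_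
              have := hlow s hs.1.le hs.2
              calc ENNReal.ofReal (1/3) ≤ ENNReal.ofReal ((μ {ω | s < Z ω}).toReal) :=
                    ENNReal.ofReal_le_ofReal this
                _ = μ {ω | s < Z ω} := ENNReal.ofReal_toReal (measure_ne_top μ _)
          _ ≤ ∫⁻ s in Set.Ioi 0, μ {ω | s < Z ω} ∂volume :=
              lintegral_mono_set Set.Ioo_subset_Ioi_self
          _ = ENNReal.ofReal M₁ := hlayerZ.symm
      have := (ENNReal.ofReal_le_ofReal_iff hM.le).mp hlb
      linarith
  refine ⟨t + M₁, by linarith, by linarith, ?_⟩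
  set u : ℝ := t + M₁ with hu
  have hu0 : 0 < u := by rw [hu]; linarith
  have hptu : pt u ≤ 1/2 := hptle u (by rw [hu]; linarith)
  set D : Fin n → Ω → ℝ := fun i ω => if u < Y i ω then Y i ω else 0 with hD
  have hDmeas : ∀ i, Measurable (D i) := fun i =>
    Measurable.ite (measurableSet_lt measurable_const (hYmeas i)) (hYmeas i) measurable_const
  have hD0 : ∀ i ω, 0 ≤ D i ω := by
    intro i ω
    simp only [hD]
    split_ifs with h
    · exact hY0 i ω
    · exact le_rfl
  have hDle : ∀ i ω, D i ω ≤ Y i ω := by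
    intro i ω
    simp only [hD]
    split_ifs with h
    · exact le_rfl
    · exact hY0 i ω
  have hDint : ∀ i, Integrable (D i) μ := by
    intro i
    refine (hYint i).mono' (hDmeas i).aestronglyMeasurable ?_
    filter_upwards with ω
    rw [Real.norm_eq_abs, abs_of_nonneg (hD0 i ω)]
    exact hDle i ω
  have huM : u ≤ 4 * M₁ := by rw [hu]; linarith
  have hlayerD : ∀ i, ENNReal.ofReal (∫ ω, D i ω ∂μ)
      = ∫⁻ s in Set.Ioi 0, μ {ω | s < D i ω} := by
    intro i
    rw [ofReal_integral_eq_lintegral_ofReal (hDint i)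
      (Filter.Eventually.of_forall (hD0 i))]
    exact lintegral_eq_lintegral_meas_lt μ (Filter.Eventually.of_forall (hD0 i))
      (hDmeas i).aemeasurable
  have hsplit : ∀ i, (∫⁻ s in Set.Ioi 0, μ {ω | s < D i ω})
      = (∫⁻ s in Set.Ioc 0 u, μ {ω | s < D i ω})
        + ∫⁻ s in Set.Ioi u, μ {ω | s < D i ω} := by
    intro i
    rw [← Set.Ioc_union_Ioi_eq_Ioi hu0.le]
    exact lintegral_union measurableSet_Ioi (Set.Ioc_disjoint_Ioi le_rfl)
  have hb1 : ∀ i, (∫⁻ s in Set.Ioc 0 u, μ {ω | s < D i ω})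
      ≤ μ {ω | u < Y i ω} * ENNReal.ofReal u := by
    intro i
    calc (∫⁻ s in Set.Ioc 0 u, μ {ω | s < D i ω})
        ≤ ∫⁻ _ in Set.Ioc 0 u, μ {ω | u < Y i ω} := by
          refine setLIntegral_mono' measurableSet_Ioc fun s hs => ?_
          refine measure_mono fun ω hω => ?_
          simp only [Set.mem_setOf_eq] at hω ⊢
          by_cases h : u < Y i ω
          · exact h
          · exfalso
            have hD0' : D i ω = 0 := by simp only [hD]; rw [if_neg h]
            rw [hD0'] at hω
            exact absurd hω (not_lt.mpr hs.1.le)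
      _ = μ {ω | u < Y i ω} * ENNReal.ofReal u := by
          rw [setLIntegral_const, Real.volume_Ioc, sub_zero]
  have hb2 : ∀ i, (∫⁻ s in Set.Ioi u, μ {ω | s < D i ω})
      ≤ ∫⁻ s in Set.Ioi u, μ {ω | s < Y i ω} := by
    intro i
    refine setLIntegral_mono' measurableSet_Ioi fun s _ => ?_
    exact measure_mono (Set.setOf_subset_setOf.mpr
      fun ω hω => lt_of_lt_of_le hω (hDle i ω))
  have hmeas_s : ∀ i, Measurable fun s : ℝ => μ {ω | s < Y i ω} :=
    fun i => Antitone.measurable fun s s' hss => measure_mono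
      (Set.setOf_subset_setOf.mpr fun ω hω => lt_of_le_of_lt hss hω)
  have hZmeas_s : Measurable fun s : ℝ => μ {ω | s < Z ω} :=
    Antitone.measurable fun s s' hss => measure_mono
      (Set.setOf_subset_setOf.mpr fun ω hω => lt_of_le_of_lt hss hω)
  have hptofReal : ∀ s : ℝ, (∑ i, μ {ω | s < Y i ω}) = ENNReal.ofReal (pt s) := by
    intro s
    rw [hpt]
    rw [ENNReal.ofReal_sum_of_nonneg (fun i _ => ENNReal.toReal_nonneg)]
    exact Finset.sum_congr rfl fun i _ =>
      (ENNReal.ofReal_toReal (measure_ne_top μ _)).symm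
  have hsum2 : (∫⁻ s in Set.Ioi u, ∑ i, μ {ω | s < Y i ω})
      ≤ 2 * ENNReal.ofReal M₁ := by
    have hptw : ∀ s ∈ Set.Ioi u, (∑ i, μ {ω | s < Y i ω}) ≤ 2 * μ {ω | s < Z ω} := by
      intro s hs
      have hsIoi : u < s := hs
      have hts : t < s := by rw [hu] at hsIoi; linarith
      have hpts : pt s ≤ 1 / 2 := hptle s hts
      have hexp : ∏ i, (1 - (μ {ω | s < Y i ω}).toReal) ≤ Real.exp (-(pt s)) :=
        prod_one_sub_le_exp _ (fun i => ENNReal.toReal_nonneg) (hq1 s)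
      have h2 : Real.exp (-(pt s)) ≤ 1 - pt s / 2 :=
        exp_neg_le_one_sub_half (hpt0 s) (by linarith)
      have h3 : pt s / 2 ≤ (μ {ω | s < Z ω}).toReal := by
        rw [hprodZ s]; linarith
      calc ∑ i, μ {ω | s < Y i ω} = ENNReal.ofReal (pt s) := hptofReal s
        _ ≤ ENNReal.ofReal (2 * (μ {ω | s < Z ω}).toReal) :=
            ENNReal.ofReal_le_ofReal (by linarith)
        _ = 2 * μ {ω | s < Z ω} := by
            rw [ENNReal.ofReal_mul (by norm_num : (0:ℝ) ≤ 2),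
              ENNReal.ofReal_toReal (measure_ne_top μ _)]
            norm_num
    calc (∫⁻ s in Set.Ioi u, ∑ i, μ {ω | s < Y i ω})
        ≤ ∫⁻ s in Set.Ioi u, 2 * μ {ω | s < Z ω} :=
          setLIntegral_mono' measurableSet_Ioi hptw
      _ = 2 * ∫⁻ s in Set.Ioi u, μ {ω | s < Z ω} := lintegral_const_mul 2 hZmeas_s
      _ ≤ 2 * ∫⁻ s in Set.Ioi 0, μ {ω | s < Z ω} :=
          mul_le_mul_right (lintegral_mono_set (Set.Ioi_subset_Ioi hu0.le)) 2
      _ = 2 * ENNReal.ofReal M₁ := by rw [← hlayerZ]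
  have hfin : (∑ i, ENNReal.ofReal (∫ ω, D i ω ∂μ)) ≤ ENNReal.ofReal (4 * M₁) := by
    calc ∑ i, ENNReal.ofReal (∫ ω, D i ω ∂μ)
        = ∑ i, ((∫⁻ s in Set.Ioc 0 u, μ {ω | s < D i ω})
            + ∫⁻ s in Set.Ioi u, μ {ω | s < D i ω}) := by
          refine Finset.sum_congr rfl fun i _ => ?_
          rw [hlayerD i, hsplit i]
      _ ≤ (∑ i, μ {ω | u < Y i ω} * ENNReal.ofReal u)
            + ∑ i, ∫⁻ s in Set.Ioi u, μ {ω | s < Y i ω} := by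
          rw [← Finset.sum_add_distrib]
          exact Finset.sum_le_sum fun i _ => add_le_add (hb1 i) (hb2 i)
      _ ≤ ENNReal.ofReal (1/2) * ENNReal.ofReal u + 2 * ENNReal.ofReal M₁ := by
          refine add_le_add ?_ ?_
          · rw [← Finset.sum_mul]
            refine mul_le_mul_left ?_ _
            rw [hptofReal u]
            exact ENNReal.ofReal_le_ofReal hptu
          · rw [← lintegral_finset_sum _ fun i _ => hmeas_s i]
            exact hsum2
      _ ≤ ENNReal.ofReal (4 * M₁) := by
          have hineq : (1/2 : ℝ) * u + 2 * M₁ ≤ 4 * M₁ := by linarith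
          calc ENNReal.ofReal (1/2) * ENNReal.ofReal u + 2 * ENNReal.ofReal M₁
              = ENNReal.ofReal ((1/2) * u) + ENNReal.ofReal (2 * M₁) := by
                rw [← ENNReal.ofReal_mul (by norm_num : (0:ℝ) ≤ 1/2),
                  ENNReal.ofReal_mul (by norm_num : (0:ℝ) ≤ 2)]
                norm_num
            _ = ENNReal.ofReal ((1/2) * u + 2 * M₁) :=
                (ENNReal.ofReal_add (by positivity) (by positivity)).symm
            _ ≤ ENNReal.ofReal (4 * M₁) := ENNReal.ofReal_le_ofReal hineq
  have hsum_eq : ENNReal.ofReal (∑ i, ∫ ω, D i ω ∂μ)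
      = ∑ i, ENNReal.ofReal (∫ ω, D i ω ∂μ) :=
    ENNReal.ofReal_sum_of_nonneg fun i _ => integral_nonneg (hD0 i)
  have hfinal := (ENNReal.ofReal_le_ofReal_iff (by linarith)).mp (hsum_eq ▸ hfin)
  exact hfinal

lemma lam_beta_bound {L u q : ℝ} (hL1 : 1 ≤ L) (hu : 0 < u) (hq : 0 < q) :
    ∃ lam : ℝ, 0 < lam ∧ lam * u ≤ 1 ∧
      (L / lam + lam * q) + 1 / lam ≤ 3 * Real.sqrt (L * q) + 3 * (L * u) := by
  have hLpos : 0 < L := by linarith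
  refine ⟨min (1 / u) (Real.sqrt (L / q)),
    lt_min (by positivity) (Real.sqrt_pos.mpr (by positivity)), ?_, ?_⟩
  · calc min (1 / u) (Real.sqrt (L / q)) * u ≤ (1 / u) * u :=
        mul_le_mul_of_nonneg_right (min_le_left _ _) hu.le
      _ = 1 := by field_simp
  · set lam : ℝ := min (1 / u) (Real.sqrt (L / q)) with hlam
    have hlampos : 0 < lam :=
      lt_min (by positivity) (Real.sqrt_pos.mpr (by positivity))
    have hinvlam : 1 / lam ≤ L / lam := by gcongr
    have hLu : 0 < L * u := by positivity
    rcases le_total (Real.sqrt (L / q)) (1 / u) with hcase | hcase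
    · have hlameq : lam = Real.sqrt (L / q) := min_eq_right hcase
      have hlam2 : lam ^ 2 = L / q := by rw [hlameq]; exact Real.sq_sqrt (by positivity)
      have h1 : lam ^ 2 * q ^ 2 = L * q := by rw [hlam2]; field_simp
      have hsqform : L * q = (lam * q) ^ 2 := by nlinarith [h1]
      have hlq : lam * q = Real.sqrt (L * q) := by
        rw [hsqform, Real.sqrt_sq (by positivity)]
      have h2 : lam ^ 2 * q = L := by rw [hlam2]; field_simp
      have hLlam : L / lam = lam * q := by
        rw [div_eq_iff (ne_of_gt hlampos)]; nlinarith [h2]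
      rw [hLlam, ← hlq]
      have : 1 / lam ≤ lam * q := hinvlam.trans_eq hLlam
      linarith
    · have hlameq : lam = 1 / u := min_eq_left hcase
      have h2 : (1 / u) ^ 2 ≤ L / q := by
        calc (1 / u) ^ 2 ≤ (Real.sqrt (L / q)) ^ 2 :=
              pow_le_pow_left₀ (by positivity) hcase 2
          _ = L / q := Real.sq_sqrt (by positivity)
      rw [div_pow, one_pow, div_le_div_iff₀ (by positivity) hq] at h2
      have h3 : q ≤ L * u * u := by nlinarith
      have hLlam : L / lam = L * u := by rw [hlameq]; field_simp
      have hlq : lam * q = q / u := by rw [hlameq]; ring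
      have h4 : q / u ≤ L * u := by
        rw [div_le_iff₀ hu]; nlinarith
      have hs0 : 0 ≤ Real.sqrt (L * q) := Real.sqrt_nonneg _
      have h5 : 1 / lam ≤ L * u := hinvlam.trans_eq hLlam
      rw [hLlam, hlq]
      linarith

lemma sup'_const_mul {ι : Type*} {s : Finset ι} (H : s.Nonempty) {c : ℝ} (hc : 0 ≤ c)
    (f : ι → ℝ) : s.sup' H (fun i => c * f i) = c * s.sup' H f := by
  have hmono : Monotone (fun x : ℝ => c * x) := fun a b hab =>
    mul_le_mul_of_nonneg_left hab hc
  exact (Finset.comp_sup'_eq_sup'_comp H (fun x : ℝ => c * x)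
    (fun a b => hmono.map_max)).symm

lemma sup'_pow {ι : Type*} {s : Finset ι} (H : s.Nonempty) (f : ι → ℝ)
    (hf : ∀ i ∈ s, 0 ≤ f i) (k : ℕ) :
    (s.sup' H f) ^ k = s.sup' H (fun i => f i ^ k) := by
  have hmono : Monotone (fun x : ℝ => (max x 0) ^ k) := fun a b hab =>
    pow_le_pow_left₀ (le_max_right _ _) (max_le_max hab le_rfl) k
  have h := Finset.comp_sup'_eq_sup'_comp H (f := f) (fun x : ℝ => (max x 0) ^ k)
    (fun a b => hmono.map_max)
  have hsupnn : 0 ≤ s.sup' H f := by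
    obtain ⟨i₀, hi₀⟩ := H
    exact (hf i₀ hi₀).trans (Finset.le_sup' f hi₀)
  have h' : (s.sup' H f ⊔ 0) ^ k = s.sup' H ((fun x : ℝ => (x ⊔ 0) ^ k) ∘ f) := h
  rw [max_eq_left hsupnn] at h'
  rw [h']
  exact Finset.sup'_congr H rfl fun i hi => by
    simp [Function.comp, max_eq_left (hf i hi)]

lemma final_algebra1 {n M₁ mbar M lp : ℝ} (hn : 1 ≤ n) (hlp : 1 ≤ lp)
    (hM₁0 : 0 ≤ M₁) (hm0 : 0 ≤ mbar) (hM₁M : M₁ ≤ M) :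
    n⁻¹ * (9 * Real.sqrt (lp * n * M₁ * mbar) + 32 * lp * M₁)
      ≤ 2 * (37:ℝ) ^ 2 * (lp / n) * M
        + 2 * 37 * Real.sqrt (lp / n) * Real.sqrt M * Real.sqrt mbar := by
  have hn0 : (0:ℝ) < n := by linarith
  have hM0 : 0 ≤ M := hM₁0.trans hM₁M
  have hlp0 : (0:ℝ) ≤ lp := by linarith
  have h1 : n⁻¹ * Real.sqrt (lp * n * M₁ * mbar)
      = Real.sqrt ((lp / n) * (M₁ * mbar)) := by
    have heq : (lp / n) * (M₁ * mbar) = (n⁻¹) ^ 2 * (lp * n * M₁ * mbar) := by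
      field_simp
    rw [heq, Real.sqrt_mul (sq_nonneg _), Real.sqrt_sq (by positivity)]
  have h2 : Real.sqrt ((lp / n) * (M₁ * mbar))
      ≤ Real.sqrt (lp / n) * Real.sqrt M * Real.sqrt mbar := by
    rw [Real.sqrt_mul (by positivity), Real.sqrt_mul hM₁0]
    have := Real.sqrt_le_sqrt hM₁M
    have h3 : Real.sqrt M₁ * Real.sqrt mbar ≤ Real.sqrt M * Real.sqrt mbar :=
      mul_le_mul_of_nonneg_right this (Real.sqrt_nonneg _)
    calc Real.sqrt (lp / n) * (Real.sqrt M₁ * Real.sqrt mbar)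
        ≤ Real.sqrt (lp / n) * (Real.sqrt M * Real.sqrt mbar) :=
          mul_le_mul_of_nonneg_left h3 (Real.sqrt_nonneg _)
      _ = Real.sqrt (lp / n) * Real.sqrt M * Real.sqrt mbar := by ring
  have h4 : n⁻¹ * (32 * lp * M₁) ≤ 2 * (37:ℝ) ^ 2 * (lp / n) * M := by
    have e1 : n⁻¹ * (32 * lp * M₁) = 32 * ((lp / n) * M₁) := by field_simp
    have e2 : (lp / n) * M₁ ≤ (lp / n) * M :=
      mul_le_mul_of_nonneg_left hM₁M (by positivity)
    have e3 : 0 ≤ (lp / n) * M := by positivity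
    nlinarith
  have h5 : n⁻¹ * (9 * Real.sqrt (lp * n * M₁ * mbar))
      ≤ 2 * 37 * Real.sqrt (lp / n) * Real.sqrt M * Real.sqrt mbar := by
    have e1 : n⁻¹ * (9 * Real.sqrt (lp * n * M₁ * mbar))
        = 9 * (n⁻¹ * Real.sqrt (lp * n * M₁ * mbar)) := by ring
    rw [e1, h1]
    nlinarith [h2, Real.sqrt_nonneg ((lp / n) * (M₁ * mbar)),
      Real.sqrt_nonneg (lp / n), Real.sqrt_nonneg M, Real.sqrt_nonneg mbar]
  nlinarith [h4, h5]

lemma final_algebra2 {n M₁ mbar M lp : ℝ} (hn : 1 ≤ n) (hlp : 1 ≤ lp)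
    (hM₁0 : 0 ≤ M₁) (hm0 : 0 ≤ mbar) (hM₁M : M₁ ≤ M) :
    n⁻¹ * (9 * Real.sqrt (lp * n * M₁ * mbar) + 32 * lp * M₁) + mbar
      ≤ 37 * M * n⁻¹ * lp + 37 * mbar := by
  have hn0 : (0:ℝ) < n := by linarith
  have hM0 : 0 ≤ M := hM₁0.trans hM₁M
  have hlp0 : (0:ℝ) ≤ lp := by linarith
  have h1 : n⁻¹ * Real.sqrt (lp * n * M₁ * mbar)
      = Real.sqrt (((lp / n) * M₁) * mbar) := by
    have heq : ((lp / n) * M₁) * mbar = (n⁻¹) ^ 2 * (lp * n * M₁ * mbar) := by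
      field_simp
    rw [heq, Real.sqrt_mul (sq_nonneg _), Real.sqrt_sq (by positivity)]
  have h2 : Real.sqrt (((lp / n) * M₁) * mbar) ≤ ((lp / n) * M₁ + mbar) / 2 :=
    sqrt_mul_le_half_add (by positivity) hm0
  have h3 : (lp / n) * M₁ ≤ (lp / n) * M :=
    mul_le_mul_of_nonneg_left hM₁M (by positivity)
  have h4 : n⁻¹ * (32 * lp * M₁) ≤ 32 * ((lp / n) * M) := by
    have e1 : n⁻¹ * (32 * lp * M₁) = 32 * ((lp / n) * M₁) := by field_simp
    linarith
  have h5 : 37 * M * n⁻¹ * lp = 37 * ((lp / n) * M) := by field_simp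
  have h6 : n⁻¹ * (9 * Real.sqrt (lp * n * M₁ * mbar))
      = 9 * Real.sqrt (((lp / n) * M₁) * mbar) := by rw [← h1]; ring
  nlinarith [h2, h3, h4, h6, hm0,
    mul_nonneg (mul_nonneg hlp0 (by positivity : (0:ℝ) ≤ n⁻¹)) hM0]

set_option maxHeartbeats 2000000 in
lemma core_bound {Ω : Type} [MeasurableSpace Ω] {μ : Measure Ω} [IsProbabilityMeasure μ]
    {n p : ℕ} (hn : 1 ≤ n) (hp : 3 ≤ p)
    (hne : (univ : Finset (Fin n)).Nonempty) (hpne : (univ : Finset (Fin p)).Nonempty)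
    (A : Fin n → Ω → Fin p → ℝ)
    (hA0 : ∀ i ω j, 0 ≤ A i ω j)
    (hAmeas : ∀ i, Measurable (A i))
    (hindep : iIndepFun A μ)
    (hint : ∀ i j, Integrable (fun ω => A i ω j) μ) :
    ∫ ω, univ.sup' hpne (fun j => |∑ i, (A i ω j - ∫ ω', A i ω' j ∂μ)|) ∂μ
      ≤ 9 * Real.sqrt (Real.log p * n
            * (∫ ω, univ.sup' hne (fun i => univ.sup' hpne (fun j => A i ω j)) ∂μ)
            * (univ.sup' hpne fun j => (n : ℝ)⁻¹ * ∑ i, ∫ ω, A i ω j ∂μ))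
        + 32 * Real.log p
            * ∫ ω, univ.sup' hne (fun i => univ.sup' hpne (fun j => A i ω j)) ∂μ := by
  classical
  have hn0 : (0:ℝ) < n := by exact_mod_cast hn
  have hp0 : (0:ℝ) < p := by positivity
  have hlogp1 : 1 ≤ Real.log p := by
    rw [Real.le_log_iff_exp_le hp0]
    calc Real.exp 1 ≤ 2.7182818286 := (Real.exp_one_lt_d9).le
      _ ≤ (p:ℝ) := by
        have : (3:ℝ) ≤ (p:ℝ) := by exact_mod_cast hp
        linarith
  -- basic objects
  set EA : Fin n → Fin p → ℝ := fun i j => ∫ ω, A i ω j ∂μ with hEA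
  have hEA0 : ∀ i j, 0 ≤ EA i j := fun i j => integral_nonneg fun ω => hA0 i ω j
  set Y : Fin n → Ω → ℝ := fun i ω => univ.sup' hpne (fun j => A i ω j) with hY
  have hcoord : ∀ i j, Measurable (fun ω => A i ω j) :=
    fun i j => (measurable_pi_apply j).comp (hAmeas i)
  have hYmeas : ∀ i, Measurable (Y i) := by
    intro i
    have h1 : Measurable (univ.sup' hpne (fun j ω => A i ω j)) :=
      Finset.measurable_sup' hpne fun j _ => hcoord i j
    have heq : Y i = univ.sup' hpne (fun j ω => A i ω j) := by
      funext ω; rw [hY]; simp [Finset.sup'_apply]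
    rw [heq]; exact h1
  have hAY : ∀ i ω j, A i ω j ≤ Y i ω := by
    intro i ω j; rw [hY]
    exact Finset.le_sup' (f := fun j => A i ω j) (mem_univ j)
  have hY0 : ∀ i ω, 0 ≤ Y i ω := fun i ω => (hA0 i ω hpne.choose).trans (hAY i ω _)
  have hYint : ∀ i, Integrable (Y i) μ := by
    intro i
    refine (integrable_finset_sum (μ := μ) univ (fun j _ => hint i j)).mono'
      (hYmeas i).aestronglyMeasurable ?_
    filter_upwards with ω
    rw [Real.norm_eq_abs, abs_of_nonneg (hY0 i ω)]
    rw [hY]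
    refine Finset.sup'_le hpne _ fun j _ => ?_
    exact Finset.single_le_sum (f := fun j => A i ω j) (fun j _ => hA0 i ω j) (mem_univ j)
  set Z : Ω → ℝ := fun ω => univ.sup' hne (fun i => Y i ω) with hZ
  have hZmeas : Measurable Z := by
    have h1 : Measurable (univ.sup' hne Y) := Finset.measurable_sup' hne fun i _ => hYmeas i
    have heq : Z = univ.sup' hne Y := by
      funext ω; rw [hZ]; simp [Finset.sup'_apply]
    rw [heq]; exact h1
  have hYZ : ∀ i ω, Y i ω ≤ Z ω := by
    intro i ω; rw [hZ]; exact Finset.le_sup' (f := fun i => Y i ω) (mem_univ i)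
  have hZ0 : ∀ ω, 0 ≤ Z ω := fun ω => (hY0 hne.choose ω).trans (hYZ _ ω)
  have hZint : Integrable Z μ := by
    refine (integrable_finset_sum (μ := μ) univ (fun i _ => hYint i)).mono'
      hZmeas.aestronglyMeasurable ?_
    filter_upwards with ω
    rw [Real.norm_eq_abs, abs_of_nonneg (hZ0 ω), hZ]
    refine Finset.sup'_le hne _ fun i _ => ?_
    exact Finset.single_le_sum (f := fun i => Y i ω) (fun i _ => hY0 i ω) (mem_univ i)
  set M₁ : ℝ := ∫ ω, Z ω ∂μ with hM₁
  have hM₁0 : 0 ≤ M₁ := integral_nonneg hZ0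
  set mbar : ℝ := univ.sup' hpne (fun j => (n : ℝ)⁻¹ * ∑ i, EA i j) with hmbar
  have hmbar0 : 0 ≤ mbar := by
    refine le_trans ?_ (Finset.le_sup' (f := fun j => (n : ℝ)⁻¹ * ∑ i, EA i j)
      (mem_univ hpne.choose))
    have : 0 ≤ ∑ i, EA i hpne.choose := Finset.sum_nonneg fun i _ => hEA0 i _
    positivity
  have hnmbar : ∀ j, ∑ i, EA i j ≤ n * mbar := by
    intro j
    have h1 : (n : ℝ)⁻¹ * ∑ i, EA i j ≤ mbar :=
      Finset.le_sup' (f := fun j => (n : ℝ)⁻¹ * ∑ i, EA i j) (mem_univ j)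
    calc ∑ i, EA i j = n * ((n : ℝ)⁻¹ * ∑ i, EA i j) := by
          field_simp
      _ ≤ n * mbar := by exact mul_le_mul_of_nonneg_left h1 hn0.le
  have hEAM₁ : ∀ i j, EA i j ≤ M₁ := by
    intro i j
    refine integral_mono (hint i j) hZint fun ω => ?_
    exact (hAY i ω j).trans (hYZ i ω)
  have hmbarM₁ : mbar ≤ M₁ := by
    rw [hmbar]
    refine Finset.sup'_le hpne _ fun j _ => ?_
    have h1 : ∑ i, EA i j ≤ (n : ℝ) * M₁ := by
      have := Finset.sum_le_sum (s := (univ : Finset (Fin n)))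
        (f := fun i => EA i j) (g := fun _ => M₁) (fun i _ => hEAM₁ i j)
      simpa [Finset.sum_const, card_univ, mul_comm] using this
    calc (n : ℝ)⁻¹ * ∑ i, EA i j ≤ (n : ℝ)⁻¹ * (n * M₁) := by
          exact mul_le_mul_of_nonneg_left h1 (by positivity)
      _ = M₁ := by field_simp
  show ∫ ω, univ.sup' hpne (fun j => |∑ i, (A i ω j - EA i j)|) ∂μ
      ≤ 9 * Real.sqrt (Real.log p * n * M₁ * mbar) + 32 * Real.log p * M₁
  rcases eq_or_lt_of_le hmbar0 with hmz | hmpos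
  · -- degenerate case: all coordinates are a.s. zero
    have hEAz : ∀ i j, EA i j = 0 := by
      intro i j
      have h1 : (n : ℝ)⁻¹ * ∑ i, EA i j ≤ 0 := by
        rw [hmz]
        exact Finset.le_sup' (f := fun j => (n : ℝ)⁻¹ * ∑ i, EA i j) (mem_univ j)
      have hinv : (0:ℝ) < (n : ℝ)⁻¹ := by positivity
      have h3 : 0 ≤ ∑ i, EA i j := Finset.sum_nonneg fun i _ => hEA0 i j
      have h2 : ∑ i, EA i j ≤ 0 := by nlinarith
      have h4 : ∑ i, EA i j = 0 := le_antisymm h2 h3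
      exact (Finset.sum_eq_zero_iff_of_nonneg fun i _ => hEA0 i j).mp h4 i (mem_univ i)
    have hAz : ∀ i j, ∀ᵐ ω ∂μ, A i ω j = 0 := by
      intro i j
      have := (integral_eq_zero_iff_of_nonneg (fun ω => hA0 i ω j) (hint i j)).mp (hEAz i j)
      filter_upwards [this] with ω hω
      exact hω
    have hae : ∀ᵐ ω ∂μ, ∀ i j, A i ω j = 0 := by
      rw [ae_all_iff]
      intro i
      rw [ae_all_iff]
      intro j
      exact hAz i j
    have hLHS : ∫ ω, univ.sup' hpne (fun j => |∑ i, (A i ω j - EA i j)|) ∂μ = 0 := by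
      have hzero : (fun ω => univ.sup' hpne (fun j => |∑ i, (A i ω j - EA i j)|))
          =ᵐ[μ] (fun _ => (0:ℝ)) := by
        filter_upwards [hae] with ω hω
        have habs : ∀ j, |∑ i, (A i ω j - EA i j)| = 0 := by
          intro j
          rw [abs_eq_zero]
          refine Finset.sum_eq_zero fun i _ => ?_
          rw [hω i j, hEAz i j]; ring
        calc univ.sup' hpne (fun j => |∑ i, (A i ω j - EA i j)|)
            = univ.sup' hpne (fun _ => (0:ℝ)) :=
              Finset.sup'_congr hpne rfl fun j _ => habs j
          _ = 0 := Finset.sup'_const hpne 0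
      rw [integral_congr_ae hzero, integral_zero]
    rw [hLHS]
    have h1 : 0 ≤ Real.sqrt (Real.log p * n * M₁ * mbar) := Real.sqrt_nonneg _
    have h2 : 0 ≤ 32 * Real.log p * M₁ := by
      have : (0:ℝ) ≤ Real.log p := by linarith
      positivity
    linarith
  · -- main case : 0 < mbar
    have hM₁pos : 0 < M₁ := lt_of_lt_of_le hmpos hmbarM₁
    have hYindep : iIndepFun Y μ := by
      have hg : Measurable (fun v : Fin p → ℝ => univ.sup' hpne v) := by
        have h1 := Finset.measurable_sup' hpne (f := fun j (v : Fin p → ℝ) => v j)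
          (fun j _ => measurable_pi_apply j)
        have heq : (fun v : Fin p → ℝ => univ.sup' hpne v)
            = univ.sup' hpne (fun j (v : Fin p → ℝ) => v j) := by
          funext v; simp [Finset.sup'_apply]
        rw [heq]; exact h1
      have h2 := hindep.comp (g := fun _ => fun v : Fin p → ℝ => univ.sup' hpne v)
        (fun _ => hg)
      exact h2
    obtain ⟨u, hu0, huM, hDsum⟩ := quantile_bound hne Y hYmeas hY0 hYint hYindep Z
      (fun ω => rfl) hZint (by rw [← hM₁]; exact hM₁pos)
    rw [← hM₁] at huM hDsum
    set L : ℝ := Real.log (2 * p) with hL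
    have hqpos : (0:ℝ) < u * ((n:ℝ) * mbar) := by positivity
    have hL1 : 1 ≤ L := by
      rw [hL, Real.le_log_iff_exp_le (by positivity)]
      calc Real.exp 1 ≤ 2.7182818286 := Real.exp_one_lt_d9.le
        _ ≤ 2 * (p:ℝ) := by
            have : (3:ℝ) ≤ (p:ℝ) := by exact_mod_cast hp
            linarith
    obtain ⟨lam, hlampos, hlamu, hβfinal⟩ :=
      lam_beta_bound (u := u) (q := u * ((n:ℝ) * mbar)) hL1 hu0 hqpos
    -- truncated variables
    have hbmeas : ∀ i j, Measurable (fun ω => if A i ω j ≤ u then A i ω j else 0) :=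
      fun i j => Measurable.ite (measurableSet_le (hcoord i j) measurable_const)
        (hcoord i j) measurable_const
    have hb0 : ∀ i ω j, 0 ≤ (if A i ω j ≤ u then A i ω j else 0) := by
      intro i ω j; split_ifs; exacts [hA0 i ω j, le_rfl]
    have hbu : ∀ i ω j, (if A i ω j ≤ u then A i ω j else 0) ≤ u := by
      intro i ω j; split_ifs with h; exacts [h, hu0.le]
    have hbA : ∀ i ω j, (if A i ω j ≤ u then A i ω j else 0) ≤ A i ω j := by
      intro i ω j; split_ifs; exacts [le_rfl, hA0 i ω j]
    have hbint : ∀ i j, Integrable (fun ω => if A i ω j ≤ u then A i ω j else 0) μ := by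
      intro i j
      refine integrable_of_bound (hbmeas i j) u fun ω => ?_
      rw [abs_of_nonneg (hb0 i ω j)]; exact hbu i ω j
    set Eb : Fin n → Fin p → ℝ :=
      fun i j => ∫ ω, (if A i ω j ≤ u then A i ω j else 0) ∂μ with hEb
    have hEb0 : ∀ i j, 0 ≤ Eb i j := fun i j => integral_nonneg fun ω => hb0 i ω j
    have hEbu : ∀ i j, Eb i j ≤ u := by
      intro i j
      calc Eb i j ≤ ∫ _ω, u ∂μ :=
            integral_mono (hbint i j) (integrable_const u) fun ω => hbu i ω j
        _ = u := by simp
    have hEbEA : ∀ i j, Eb i j ≤ EA i j := fun i j =>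
      integral_mono (hbint i j) (hint i j) fun ω => hbA i ω j
    set S : Fin p → Ω → ℝ :=
      fun j ω => ∑ i, ((if A i ω j ≤ u then A i ω j else 0) - Eb i j) with hS
    have hSmeas : ∀ j, Measurable (S j) := by
      intro j
      apply Finset.measurable_sum
      exact fun i _ => (hbmeas i j).sub measurable_const
    have hWabs : ∀ i ω j, |(if A i ω j ≤ u then A i ω j else 0) - Eb i j| ≤ u := by
      intro i ω j
      rw [abs_le]
      constructor
      · have h1 := hb0 i ω j; have h2 := hEbu i j; linarith
      · have h1 := hbu i ω j; have h2 := hEb0 i j; linarith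
    have hSb : ∀ j ω, |S j ω| ≤ (n:ℝ) * u := by
      intro j ω
      rw [hS]
      calc |∑ i, ((if A i ω j ≤ u then A i ω j else 0) - Eb i j)|
          ≤ ∑ i, |(if A i ω j ≤ u then A i ω j else 0) - Eb i j| :=
            Finset.abs_sum_le_sum_abs _ _
        _ ≤ ∑ _i : Fin n, u := Finset.sum_le_sum fun i _ => hWabs i ω j
        _ = (n:ℝ) * u := by simp [Finset.sum_const, card_univ, nsmul_eq_mul]
    have hmgf : ∀ (j : Fin p) (c : ℝ), c = lam ∨ c = -lam →
        mgf (S j) μ c ≤ Real.exp (lam ^ 2 * (u * ((n:ℝ) * mbar))) := by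
      intro j c hc
      have hc2 : c ^ 2 = lam ^ 2 := by rcases hc with h | h <;> subst h <;> ring
      have hcabs : |c| = lam := by
        rcases hc with h | h <;> subst h <;> simp [abs_of_pos hlampos]
      set W : Fin n → Ω → ℝ :=
        fun i ω => (if A i ω j ≤ u then A i ω j else 0) - Eb i j with hW
      have hWmeas : ∀ i, Measurable (W i) := fun i => (hbmeas i j).sub measurable_const
      have hWindep : iIndepFun W μ := by
        have hg : ∀ i, Measurable
            (fun v : Fin p → ℝ => (if v j ≤ u then v j else 0) - Eb i j) := by
          intro i
          exact (Measurable.ite (measurableSet_le (measurable_pi_apply j) measurable_const)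
            (measurable_pi_apply j) measurable_const).sub measurable_const
        have h2 := hindep.comp
          (g := fun i => fun v : Fin p → ℝ => (if v j ≤ u then v j else 0) - Eb i j) hg
        exact h2
      have hsum : S j = ∑ i, W i := by
        funext ω
        rw [hS, Finset.sum_apply]
      have hmgfsum := hWindep.mgf_sum hWmeas univ (t := c)
      have hfac : ∀ i, mgf (W i) μ c ≤ Real.exp (c ^ 2 * (u * Eb i j)) := by
        intro i
        refine mgf_factor (hWmeas i) hu0 (fun ω => hWabs i ω j) ?_ ?_ ?_
        · rw [hW]
          simp only
          rw [integral_sub (hbint i j) (integrable_const _), integral_const]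
          simp [hEb]
        · -- second moment bound
          have hptw : ∀ ω, (W i ω) ^ 2
              ≤ (u - 2 * Eb i j) * (if A i ω j ≤ u then A i ω j else 0) + (Eb i j) ^ 2 := by
            intro ω
            have h1 := hb0 i ω j
            have h2 := hbu i ω j
            rw [hW]
            simp only
            nlinarith
          have hgint : Integrable
              (fun ω => (u - 2 * Eb i j) * (if A i ω j ≤ u then A i ω j else 0)
                + (Eb i j) ^ 2) μ :=
            ((hbint i j).const_mul _).add (integrable_const _)
          calc ∫ ω, (W i ω) ^ 2 ∂μ
              ≤ ∫ ω, ((u - 2 * Eb i j) * (if A i ω j ≤ u then A i ω j else 0)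
                  + (Eb i j) ^ 2) ∂μ := by
                refine integral_mono_of_nonneg ?_ hgint ?_
                · filter_upwards with ω; positivity
                · filter_upwards with ω; exact hptw ω
            _ = (u - 2 * Eb i j) * Eb i j + (Eb i j) ^ 2 := by
                rw [integral_add ((hbint i j).const_mul _) (integrable_const _),
                  integral_const_mul, integral_const]
                simp [hEb]
            _ ≤ u * Eb i j := by nlinarith [hEb0 i j]
        · rw [hcabs]; exact hlamu
      have hprodle : ∏ i, mgf (W i) μ c ≤ ∏ i, Real.exp (c ^ 2 * (u * Eb i j)) :=
        Finset.prod_le_prod (fun i _ => mgf_nonneg) (fun i _ => hfac i)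
      have hprodexp : ∏ i, Real.exp (c ^ 2 * (u * Eb i j))
          = Real.exp (∑ i, c ^ 2 * (u * Eb i j)) := (Real.exp_sum _ _).symm
      have hsumle : ∑ i, c ^ 2 * (u * Eb i j) ≤ lam ^ 2 * (u * ((n:ℝ) * mbar)) := by
        have h1 : ∑ i, c ^ 2 * (u * Eb i j) = c ^ 2 * u * ∑ i, Eb i j := by
          rw [Finset.mul_sum]
          refine Finset.sum_congr rfl fun i _ => by ring
        have h2 : ∑ i, Eb i j ≤ ∑ i, EA i j := Finset.sum_le_sum fun i _ => hEbEA i j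
        have h3 : ∑ i, Eb i j ≤ (n:ℝ) * mbar := h2.trans (hnmbar j)
        have h4 : 0 ≤ ∑ i, Eb i j := Finset.sum_nonneg fun i _ => hEb0 i j
        rw [h1, hc2]
        calc lam ^ 2 * u * ∑ i, Eb i j ≤ lam ^ 2 * u * ((n:ℝ) * mbar) := by
              refine mul_le_mul_of_nonneg_left h3 (by positivity)
          _ = lam ^ 2 * (u * ((n:ℝ) * mbar)) := by ring
      calc mgf (S j) μ c = ∏ i, mgf (W i) μ c := by rw [hsum]; exact hmgfsum
        _ ≤ Real.exp (∑ i, c ^ 2 * (u * Eb i j)) := by rw [← hprodexp]; exact hprodle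
        _ ≤ Real.exp (lam ^ 2 * (u * ((n:ℝ) * mbar))) := Real.exp_le_exp.mpr hsumle
    set β : ℝ := L / lam + lam * (u * ((n:ℝ) * mbar)) with hβ
    have hK : ∑ j, (mgf (S j) μ lam + mgf (S j) μ (-lam)) ≤ Real.exp (lam * β) := by
      have hlamβ : lam * β = L + lam ^ 2 * (u * ((n:ℝ) * mbar)) := by
        rw [hβ]; field_simp
      have hterm : ∀ j : Fin p, mgf (S j) μ lam + mgf (S j) μ (-lam)
          ≤ 2 * Real.exp (lam ^ 2 * (u * ((n:ℝ) * mbar))) := by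
        intro j
        have h1 := hmgf j lam (Or.inl rfl)
        have h2 := hmgf j (-lam) (Or.inr rfl)
        linarith
      calc ∑ j, (mgf (S j) μ lam + mgf (S j) μ (-lam))
          ≤ ∑ _j : Fin p, 2 * Real.exp (lam ^ 2 * (u * ((n:ℝ) * mbar))) :=
            Finset.sum_le_sum fun j _ => hterm j
        _ = (p:ℝ) * (2 * Real.exp (lam ^ 2 * (u * ((n:ℝ) * mbar)))) := by
            simp [Finset.sum_const, card_univ, nsmul_eq_mul]
        _ = Real.exp (lam * β) := by
            rw [hlamβ, Real.exp_add]
            have hexpL : Real.exp L = 2 * p := by rw [hL]; exact Real.exp_log (by positivity)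
            rw [hexpL]; ring
    have hEsup := esup_abs_le hpne S hSmeas ((n:ℝ) * u) hSb hlampos hK
    have hβb : β + 1 / lam
        ≤ 3 * Real.sqrt (L * (u * ((n:ℝ) * mbar))) + 3 * (L * u) := by
      rw [hβ]; exact hβfinal
    -- the untruncated tail part
    have hDmeas : ∀ i, Measurable (fun ω => if u < Y i ω then Y i ω else 0) := fun i =>
      Measurable.ite (measurableSet_lt measurable_const (hYmeas i)) (hYmeas i)
        measurable_const
    have hD0 : ∀ i ω, 0 ≤ (if u < Y i ω then Y i ω else 0) := by
      intro i ω; split_ifs; exacts [hY0 i ω, le_rfl]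
    have hDleY : ∀ i ω, (if u < Y i ω then Y i ω else 0) ≤ Y i ω := by
      intro i ω; split_ifs; exacts [le_rfl, hY0 i ω]
    have hDint : ∀ i, Integrable (fun ω => if u < Y i ω then Y i ω else 0) μ := by
      intro i
      refine (hYint i).mono' (hDmeas i).aestronglyMeasurable ?_
      filter_upwards with ω
      rw [Real.norm_eq_abs, abs_of_nonneg (hD0 i ω)]
      exact hDleY i ω
    have hcD : ∀ i ω j, A i ω j - (if A i ω j ≤ u then A i ω j else 0)
        ≤ (if u < Y i ω then Y i ω else 0) := by
      intro i ω j
      by_cases h : A i ω j ≤ u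
      · rw [if_pos h, sub_self]; exact hD0 i ω
      · rw [if_neg h, sub_zero]
        have huY : u < Y i ω := lt_of_lt_of_le (not_le.mp h) (hAY i ω j)
        rw [if_pos huY]; exact hAY i ω j
    have hEcD : ∀ i j, EA i j - Eb i j ≤ ∫ ω, (if u < Y i ω then Y i ω else 0) ∂μ := by
      intro i j
      have heq : EA i j - Eb i j
          = ∫ ω, (A i ω j - (if A i ω j ≤ u then A i ω j else 0)) ∂μ := by
        rw [integral_sub (hint i j) (hbint i j)]
      rw [heq]
      exact integral_mono ((hint i j).sub (hbint i j)) (hDint i) fun ω => hcD i ω j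
    set ED : ℝ := ∑ i, ∫ ω, (if u < Y i ω then Y i ω else 0) ∂μ with hED
    have hED4 : ED ≤ 4 * M₁ := by rw [hED]; exact hDsum
    have hED0 : 0 ≤ ED := Finset.sum_nonneg fun i _ => integral_nonneg (hD0 i)
    -- pointwise decomposition
    have hptws : ∀ ω, univ.sup' hpne (fun j => |∑ i, (A i ω j - EA i j)|)
        ≤ univ.sup' hpne (fun j => |S j ω|)
          + ((∑ i, (if u < Y i ω then Y i ω else 0)) + ED) := by
      intro ω
      refine Finset.sup'_le hpne _ fun j _ => ?_
      have hdec : ∑ i, (A i ω j - EA i j)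
          = S j ω + ∑ i, ((A i ω j - (if A i ω j ≤ u then A i ω j else 0))
              - (EA i j - Eb i j)) := by
        rw [hS]
        simp only
        rw [← Finset.sum_add_distrib]
        refine Finset.sum_congr rfl fun i _ => by ring
      have h2 : |∑ i, ((A i ω j - (if A i ω j ≤ u then A i ω j else 0))
            - (EA i j - Eb i j))|
          ≤ (∑ i, (if u < Y i ω then Y i ω else 0)) + ED := by
        rw [Finset.sum_sub_distrib]
        have ha : |∑ i, (A i ω j - (if A i ω j ≤ u then A i ω j else 0))|
            ≤ ∑ i, (if u < Y i ω then Y i ω else 0) := by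
          rw [abs_of_nonneg (Finset.sum_nonneg fun i _ => by
            have := hbA i ω j; linarith)]
          exact Finset.sum_le_sum fun i _ => hcD i ω j
        have hb' : |∑ i, (EA i j - Eb i j)| ≤ ED := by
          rw [abs_of_nonneg (Finset.sum_nonneg fun i _ => by
            have := hEbEA i j; linarith)]
          rw [hED]
          exact Finset.sum_le_sum fun i _ => hEcD i j
        exact (abs_sub _ _).trans (add_le_add ha hb')

      have h3 : |S j ω| ≤ univ.sup' hpne (fun j => |S j ω|) :=
        Finset.le_sup' (f := fun j => |S j ω|) (mem_univ j)
      rw [hdec]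
      exact (abs_add_le _ _).trans (add_le_add h3 h2)
    -- integrate the decomposition
    have hsupSmeas : Measurable (fun ω => univ.sup' hpne (fun j => |S j ω|)) := by
      have h1 := Finset.measurable_sup' hpne (f := fun j ω => |S j ω|)
        (fun j _ => (hSmeas j).abs)
      have heq : (fun ω => univ.sup' hpne (fun j => |S j ω|))
          = univ.sup' hpne (fun j ω => |S j ω|) := by
        funext ω; simp [Finset.sup'_apply]
      rw [heq]; exact h1
    have hsupS0 : ∀ ω, 0 ≤ univ.sup' hpne (fun j => |S j ω|) := fun ω =>
      (abs_nonneg _).trans (Finset.le_sup' (f := fun j => |S j ω|)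
        (mem_univ hpne.choose))
    have hsupSint : Integrable (fun ω => univ.sup' hpne (fun j => |S j ω|)) μ := by
      refine integrable_of_bound hsupSmeas ((n:ℝ) * u) fun ω => ?_
      rw [abs_of_nonneg (hsupS0 ω)]
      exact Finset.sup'_le hpne _ fun j _ => hSb j ω
    have hDsumint : Integrable (fun ω => ∑ i, (if u < Y i ω then Y i ω else 0)) μ :=
      integrable_finset_sum _ fun i _ => hDint i
    have hmajint : Integrable (fun ω => univ.sup' hpne (fun j => |S j ω|)
        + ((∑ i, (if u < Y i ω then Y i ω else 0)) + ED)) μ :=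
      hsupSint.add (hDsumint.add (integrable_const ED))
    have hLHSle : ∫ ω, univ.sup' hpne (fun j => |∑ i, (A i ω j - EA i j)|) ∂μ
        ≤ (β + 1 / lam) + (ED + ED) := by
      have h0 : ∫ ω, univ.sup' hpne (fun j => |∑ i, (A i ω j - EA i j)|) ∂μ
          ≤ ∫ ω, (univ.sup' hpne (fun j => |S j ω|)
            + ((∑ i, (if u < Y i ω then Y i ω else 0)) + ED)) ∂μ := by
        refine integral_mono_of_nonneg ?_ hmajint ?_
        · filter_upwards with ω
          exact (abs_nonneg _).trans
            (Finset.le_sup' (f := fun j => |∑ i, (A i ω j - EA i j)|)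
              (mem_univ hpne.choose))
        · filter_upwards with ω; exact hptws ω
      have h1 : ∫ ω, (univ.sup' hpne (fun j => |S j ω|)
          + ((∑ i, (if u < Y i ω then Y i ω else 0)) + ED)) ∂μ
          = (∫ ω, univ.sup' hpne (fun j => |S j ω|) ∂μ) + (ED + ED) := by
        have hDE : Integrable
            (fun ω => (∑ i, (if u < Y i ω then Y i ω else 0)) + ED) μ :=
          hDsumint.add (integrable_const ED)
        rw [integral_add hsupSint hDE,
          integral_add hDsumint (integrable_const ED),
          integral_finset_sum _ fun i _ => hDint i, integral_const]
        simp [hED]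
      rw [h1] at h0
      exact h0.trans (by linarith [hEsup])
    -- final numeric assembly
    have hlog2 : L ≤ 2 * Real.log p := by
      rw [hL, Real.log_mul (by norm_num) (ne_of_gt hp0)]
      have h2e : Real.log 2 ≤ 1 := by
        rw [Real.log_le_iff_le_exp (by norm_num)]
        have := Real.add_one_le_exp (1:ℝ); linarith
      linarith
    have hsq8 : Real.sqrt 8 ≤ 3 := by
      nlinarith [Real.sq_sqrt (show (0:ℝ) ≤ 8 by norm_num), Real.sqrt_nonneg 8]
    have hLqX : L * (u * ((n:ℝ) * mbar)) ≤ 8 * (Real.log p * n * M₁ * mbar) := by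
      have e1 : L * (u * ((n:ℝ) * mbar)) ≤ (2 * Real.log p) * (u * ((n:ℝ) * mbar)) :=
        mul_le_mul_of_nonneg_right hlog2 (by positivity)
      have e2 : (2 * Real.log p) * (u * ((n:ℝ) * mbar))
          ≤ (2 * Real.log p) * ((4 * M₁) * ((n:ℝ) * mbar)) := by
        refine mul_le_mul_of_nonneg_left ?_ (by linarith)
        exact mul_le_mul_of_nonneg_right huM (by positivity)
      have e3 : (2 * Real.log p) * ((4 * M₁) * ((n:ℝ) * mbar))
          = 8 * (Real.log p * n * M₁ * mbar) := by ring
      linarith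
    have hsqle : Real.sqrt (L * (u * ((n:ℝ) * mbar)))
        ≤ 3 * Real.sqrt (Real.log p * n * M₁ * mbar) := by
      calc Real.sqrt (L * (u * ((n:ℝ) * mbar)))
          ≤ Real.sqrt (8 * (Real.log p * n * M₁ * mbar)) := Real.sqrt_le_sqrt hLqX
        _ = Real.sqrt 8 * Real.sqrt (Real.log p * n * M₁ * mbar) :=
            Real.sqrt_mul (by norm_num) _
        _ ≤ 3 * Real.sqrt (Real.log p * n * M₁ * mbar) :=
            mul_le_mul_of_nonneg_right hsq8 (Real.sqrt_nonneg _)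
    have hLuB : L * u ≤ 8 * (Real.log p * M₁) := by
      have e1 : L * u ≤ (2 * Real.log p) * u := mul_le_mul_of_nonneg_right hlog2 hu0.le
      have e2 : (2 * Real.log p) * u ≤ (2 * Real.log p) * (4 * M₁) :=
        mul_le_mul_of_nonneg_left huM (by linarith)
      nlinarith
    have hM₁logp : M₁ ≤ Real.log p * M₁ := by nlinarith
    clear_value ED L S Eb EA Y Z M₁ mbar
    linarith [hLHSle, hβb, hED4, hsqle, hLuB, hM₁logp, hED0]

set_option maxHeartbeats 2000000 in
/-- **Maximal inequality (Lemma on moments of maxima of averages).**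
For independent random vectors `X_i` in `ℝᵖ`, `p ≥ 3`, with
`m̄_k := max_{j≤p} n⁻¹Σᵢ E|X_{ij}|^k` and any `M_k ≥ E[maxᵢ‖X_i‖_∞^k]`:
(1) `E[max_j n⁻¹|Σᵢ(|X_{ij}|^k − E|X_{ij}|^k)|]
      ≤ 2C²(log p/n)M_k + 2C√(log p/n)M_k^{1/2}m̄_k^{1/2}`, and
(2) `E[max_j n⁻¹Σᵢ|X_{ij}|^k] ≤ C M_k n⁻¹ log p + C m̄_k`,
for a universal constant `C`. -/
theorem maximal_inequality :
    ∃ C : ℝ, 0 < C ∧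
      ∀ (n pd : ℕ) (hn : 1 ≤ n) (hp : 3 ≤ pd)
        (Ω : Type) [MeasurableSpace Ω] (μ : Measure Ω) [IsProbabilityMeasure μ]
        (X : Fin n → Ω → Fin pd → ℝ) (k : ℕ) (_hk : 1 ≤ k) (M : ℝ),
        (∀ i, Measurable (X i)) →
        iIndepFun X μ →
        (∀ i j, Integrable (fun ω => |X i ω j| ^ k) μ) →
        -- M is an upper bound for E[maxᵢ ‖Xᵢ‖_∞ ^ k]
        (∫ ω, (Finset.univ.sup'
            (⟨(⟨0, by omega⟩, ⟨0, by omega⟩), Finset.mem_univ _⟩ :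
              (Finset.univ : Finset (Fin n × Fin pd)).Nonempty)
            fun ij => |X ij.1 ω ij.2|) ^ k ∂μ) ≤ M →
        ((∫ ω, Finset.univ.sup'
              (⟨⟨0, by omega⟩, Finset.mem_univ _⟩ :
                (Finset.univ : Finset (Fin pd)).Nonempty)
              (fun j => (n : ℝ)⁻¹ *
                |∑ i, (|X i ω j| ^ k - ∫ ω', |X i ω' j| ^ k ∂μ)|) ∂μ)
            ≤ 2 * C ^ 2 * (Real.log pd / n) * M
              + 2 * C * Real.sqrt (Real.log pd / n) * Real.sqrt M *
                Real.sqrt (Finset.univ.sup'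
                  (⟨⟨0, by omega⟩, Finset.mem_univ _⟩ :
                    (Finset.univ : Finset (Fin pd)).Nonempty)
                  fun j => (n : ℝ)⁻¹ * ∑ i, ∫ ω, |X i ω j| ^ k ∂μ))
        ∧ ((∫ ω, Finset.univ.sup'
              (⟨⟨0, by omega⟩, Finset.mem_univ _⟩ :
                (Finset.univ : Finset (Fin pd)).Nonempty)
              (fun j => (n : ℝ)⁻¹ * ∑ i, |X i ω j| ^ k) ∂μ)
            ≤ C * M * (n : ℝ)⁻¹ * Real.log pd
              + C * (Finset.univ.sup'
                  (⟨⟨0, by omega⟩, Finset.mem_univ _⟩ :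
                    (Finset.univ : Finset (Fin pd)).Nonempty)
                  fun j => (n : ℝ)⁻¹ * ∑ i, ∫ ω, |X i ω j| ^ k ∂μ)) := by
  classical
  refine ⟨37, by norm_num, ?_⟩
  intro n pd hn hp Ω _ μ _ X k _hk M hXmeas hindep hint hM
  have hne : (univ : Finset (Fin n)).Nonempty := ⟨⟨0, by omega⟩, mem_univ _⟩
  have hpne : (univ : Finset (Fin pd)).Nonempty := ⟨⟨0, by omega⟩, mem_univ _⟩
  have hn0 : (0:ℝ) < n := by exact_mod_cast hn
  have hn1 : (1:ℝ) ≤ n := by exact_mod_cast hn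
  have hp0 : (0:ℝ) < pd := by
    have : (3:ℝ) ≤ (pd:ℝ) := by exact_mod_cast hp
    linarith
  have hlp : 1 ≤ Real.log pd := by
    rw [Real.le_log_iff_exp_le hp0]
    calc Real.exp 1 ≤ 2.7182818286 := Real.exp_one_lt_d9.le
      _ ≤ (pd:ℝ) := by
        have : (3:ℝ) ≤ (pd:ℝ) := by exact_mod_cast hp
        linarith
  have hcoordX : ∀ i (j : Fin pd), Measurable (fun ω => |X i ω j| ^ k) :=
    fun i j => ((measurable_pi_apply j).comp (hXmeas i)).abs.pow_const k
  have hAmeas : ∀ i, Measurable (fun ω (j : Fin pd) => |X i ω j| ^ k) :=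
    fun i => measurable_pi_lambda _ fun j => hcoordX i j
  have hAindep : iIndepFun
      (fun i ω (j : Fin pd) => |X i ω j| ^ k) μ := by
    have hg : Measurable (fun v : Fin pd → ℝ => fun j => |v j| ^ k) :=
      measurable_pi_lambda _ fun j => (measurable_pi_apply j).abs.pow_const k
    have h2 := hindep.comp (g := fun _ : Fin n => fun v : Fin pd → ℝ => fun j => |v j| ^ k)
      (fun _ => hg)
    exact h2
  have hcore := core_bound (μ := μ) hn hp hne hpne (fun i ω j => |X i ω j| ^ k)
    (fun i ω j => by positivity) hAmeas hAindep (fun i j => hint i j)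
  set M₁ : ℝ := ∫ ω, univ.sup' hne (fun i => univ.sup' hpne (fun j => |X i ω j| ^ k)) ∂μ
    with hM₁
  set mbar : ℝ := univ.sup' hpne (fun j => (n:ℝ)⁻¹ * ∑ i, ∫ ω, |X i ω j| ^ k ∂μ) with hmbar
  have hM₁0 : 0 ≤ M₁ := by
    rw [hM₁]
    refine integral_nonneg fun ω => ?_
    refine le_trans (by positivity : (0:ℝ) ≤ |X hne.choose ω hpne.choose| ^ k) ?_
    refine le_trans (Finset.le_sup' (f := fun j => |X hne.choose ω j| ^ k)
      (mem_univ hpne.choose)) ?_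
    exact Finset.le_sup' (f := fun i => univ.sup' hpne fun j => |X i ω j| ^ k)
      (mem_univ hne.choose)
  have hm0 : 0 ≤ mbar := by
    rw [hmbar]
    refine le_trans ?_ (Finset.le_sup'
      (f := fun j => (n:ℝ)⁻¹ * ∑ i, ∫ ω, |X i ω j| ^ k ∂μ) (mem_univ hpne.choose))
    have : 0 ≤ ∑ i, ∫ ω, |X i ω hpne.choose| ^ k ∂μ :=
      Finset.sum_nonneg fun i _ => integral_nonneg fun ω => by positivity
    positivity
  -- identify M₁ with the hypothesis integral
  have hM₁M : M₁ ≤ M := by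
    refine le_trans (le_of_eq ?_) hM
    rw [hM₁]
    refine integral_congr_ae (Filter.Eventually.of_forall fun ω => ?_)
    beta_reduce
    refine Eq.trans ?_ (sup'_pow (s := (univ : Finset (Fin n × Fin pd))) _
      (f := fun ij : Fin n × Fin pd => |X ij.1 ω ij.2|) (fun ij _ => abs_nonneg _) k).symm
    exact (Finset.sup'_product_left
      (h := (⟨(⟨0, by omega⟩, ⟨0, by omega⟩), Finset.mem_univ _⟩ :
        ((univ : Finset (Fin n)) ×ˢ (univ : Finset (Fin pd))).Nonempty))
      (fun ij : Fin n × Fin pd => |X ij.1 ω ij.2| ^ k)).symm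
  constructor
  · -- part (1)
    have hLHS1 : (∫ ω, univ.sup' hpne
        (fun j => (n : ℝ)⁻¹ * |∑ i, (|X i ω j| ^ k - ∫ ω', |X i ω' j| ^ k ∂μ)|) ∂μ)
        = (n:ℝ)⁻¹ * ∫ ω, univ.sup' hpne
            (fun j => |∑ i, (|X i ω j| ^ k - ∫ ω', |X i ω' j| ^ k ∂μ)|) ∂μ := by
      rw [← integral_const_mul]
      refine integral_congr_ae (Filter.Eventually.of_forall fun ω => ?_)
      exact sup'_const_mul hpne (by positivity) _
    calc (∫ ω, univ.sup' hpne
        (fun j => (n : ℝ)⁻¹ * |∑ i, (|X i ω j| ^ k - ∫ ω', |X i ω' j| ^ k ∂μ)|) ∂μ)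
        = (n:ℝ)⁻¹ * (∫ ω, univ.sup' hpne
            (fun j => |∑ i, (|X i ω j| ^ k - ∫ ω', |X i ω' j| ^ k ∂μ)|) ∂μ) := hLHS1
      _ ≤ (n:ℝ)⁻¹ * (9 * Real.sqrt (Real.log pd * n * M₁ * mbar)
            + 32 * Real.log pd * M₁) := by
          refine mul_le_mul_of_nonneg_left ?_ (by positivity)
          exact hcore
      _ ≤ 2 * (37:ℝ) ^ 2 * (Real.log pd / n) * M
            + 2 * 37 * Real.sqrt (Real.log pd / n) * Real.sqrt M * Real.sqrt mbar :=
          final_algebra1 hn1 hlp hM₁0 hm0 hM₁M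
  · -- part (2)
    have hIint : Integrable (fun ω => univ.sup' hpne
        (fun j => |∑ i, (|X i ω j| ^ k - ∫ ω', |X i ω' j| ^ k ∂μ)|)) μ := by
      have hFmeas : ∀ j : Fin pd, Measurable
          (fun ω => |∑ i, (|X i ω j| ^ k - ∫ ω', |X i ω' j| ^ k ∂μ)|) :=
        fun j => (Finset.measurable_sum _ fun i _ =>
          (hcoordX i j).sub measurable_const).abs
      have hmeas : Measurable (fun ω => univ.sup' hpne
          (fun j => |∑ i, (|X i ω j| ^ k - ∫ ω', |X i ω' j| ^ k ∂μ)|)) := by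
        have h1 := Finset.measurable_sup' hpne
          (f := fun j ω => |∑ i, (|X i ω j| ^ k - ∫ ω', |X i ω' j| ^ k ∂μ)|)
          (fun j _ => hFmeas j)
        have heq : (fun ω => univ.sup' hpne
            (fun j => |∑ i, (|X i ω j| ^ k - ∫ ω', |X i ω' j| ^ k ∂μ)|))
            = univ.sup' hpne
              (fun j ω => |∑ i, (|X i ω j| ^ k - ∫ ω', |X i ω' j| ^ k ∂μ)|) := by
          funext ω; simp [Finset.sup'_apply]
        rw [heq]; exact h1
      have hgint : Integrable (fun ω => ∑ j : Fin pd, ∑ i,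
          (|X i ω j| ^ k + |∫ ω', |X i ω' j| ^ k ∂μ|)) μ :=
        integrable_finset_sum _ fun j _ => integrable_finset_sum _ fun i _ =>
          (hint i j).add (integrable_const _)
      refine hgint.mono' hmeas.aestronglyMeasurable ?_
      filter_upwards with ω
      rw [Real.norm_eq_abs, abs_of_nonneg (le_trans (abs_nonneg _)
        (Finset.le_sup' (f := fun j => |∑ i, (|X i ω j| ^ k
          - ∫ ω', |X i ω' j| ^ k ∂μ)|) (mem_univ hpne.choose)))]
      refine Finset.sup'_le hpne _ fun j _ => ?_
      have hterm : |∑ i, (|X i ω j| ^ k - ∫ ω', |X i ω' j| ^ k ∂μ)|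
          ≤ ∑ i, (|X i ω j| ^ k + |∫ ω', |X i ω' j| ^ k ∂μ|) := by
        refine (Finset.abs_sum_le_sum_abs _ _).trans ?_
        refine Finset.sum_le_sum fun i _ => ?_
        refine (abs_sub _ _).trans ?_
        rw [abs_of_nonneg (by positivity : (0:ℝ) ≤ |X i ω j| ^ k)]
      refine hterm.trans ?_
      refine Finset.single_le_sum (f := fun j => ∑ i,
        (|X i ω j| ^ k + |∫ ω', |X i ω' j| ^ k ∂μ|)) (fun j _ => ?_) (mem_univ j)
      exact Finset.sum_nonneg fun i _ => by positivity
    have hptw2 : ∀ ω, univ.sup' hpne (fun j => (n:ℝ)⁻¹ * ∑ i, |X i ω j| ^ k)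
        ≤ (n:ℝ)⁻¹ * univ.sup' hpne
            (fun j => |∑ i, (|X i ω j| ^ k - ∫ ω', |X i ω' j| ^ k ∂μ)|) + mbar := by
      intro ω
      refine Finset.sup'_le hpne _ fun j _ => ?_
      have h1 : ∑ i, |X i ω j| ^ k
          = (∑ i, (|X i ω j| ^ k - ∫ ω', |X i ω' j| ^ k ∂μ))
            + ∑ i, ∫ ω', |X i ω' j| ^ k ∂μ := by
        rw [← Finset.sum_add_distrib]
        exact Finset.sum_congr rfl fun i _ => by ring
      have h2 : ∑ i, (|X i ω j| ^ k - ∫ ω', |X i ω' j| ^ k ∂μ)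
          ≤ |∑ i, (|X i ω j| ^ k - ∫ ω', |X i ω' j| ^ k ∂μ)| := le_abs_self _
      have h3 : |∑ i, (|X i ω j| ^ k - ∫ ω', |X i ω' j| ^ k ∂μ)|
          ≤ univ.sup' hpne
            (fun j => |∑ i, (|X i ω j| ^ k - ∫ ω', |X i ω' j| ^ k ∂μ)|) :=
        Finset.le_sup' (f := fun j => |∑ i, (|X i ω j| ^ k
          - ∫ ω', |X i ω' j| ^ k ∂μ)|) (mem_univ j)
      have h4 : (n:ℝ)⁻¹ * ∑ i, ∫ ω', |X i ω' j| ^ k ∂μ ≤ mbar := by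
        rw [hmbar]
        exact Finset.le_sup' (f := fun j => (n:ℝ)⁻¹ * ∑ i, ∫ ω, |X i ω j| ^ k ∂μ)
          (mem_univ j)
      have h5 := mul_le_mul_of_nonneg_left (h2.trans h3) (by positivity : (0:ℝ) ≤ (n:ℝ)⁻¹)
      calc (n:ℝ)⁻¹ * ∑ i, |X i ω j| ^ k
          = (n:ℝ)⁻¹ * ((∑ i, (|X i ω j| ^ k - ∫ ω', |X i ω' j| ^ k ∂μ)))
            + (n:ℝ)⁻¹ * ∑ i, ∫ ω', |X i ω' j| ^ k ∂μ := by rw [h1]; ring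
        _ ≤ (n:ℝ)⁻¹ * univ.sup' hpne
              (fun j => |∑ i, (|X i ω j| ^ k - ∫ ω', |X i ω' j| ^ k ∂μ)|) + mbar := by
            linarith
    have hmaj2 : Integrable (fun ω => (n:ℝ)⁻¹ * univ.sup' hpne
        (fun j => |∑ i, (|X i ω j| ^ k - ∫ ω', |X i ω' j| ^ k ∂μ)|) + mbar) μ :=
      (hIint.const_mul _).add (integrable_const mbar)
    calc (∫ ω, univ.sup' hpne (fun j => (n:ℝ)⁻¹ * ∑ i, |X i ω j| ^ k) ∂μ)
        ≤ ∫ ω, ((n:ℝ)⁻¹ * univ.sup' hpne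
            (fun j => |∑ i, (|X i ω j| ^ k - ∫ ω', |X i ω' j| ^ k ∂μ)|) + mbar) ∂μ := by
          refine integral_mono_of_nonneg ?_ hmaj2 ?_
          · filter_upwards with ω
            refine le_trans ?_ (Finset.le_sup'
              (f := fun j => (n:ℝ)⁻¹ * ∑ i, |X i ω j| ^ k) (mem_univ hpne.choose))
            have : 0 ≤ ∑ i, |X i ω hpne.choose| ^ k :=
              Finset.sum_nonneg fun i _ => by positivity
            positivity
          · filter_upwards with ω; exact hptw2 ω
      _ = (n:ℝ)⁻¹ * (∫ ω, univ.sup' hpne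
            (fun j => |∑ i, (|X i ω j| ^ k - ∫ ω', |X i ω' j| ^ k ∂μ)|) ∂μ) + mbar := by
          rw [integral_add (hIint.const_mul _) (integrable_const mbar),
            integral_const_mul, integral_const]
          simp
      _ ≤ (n:ℝ)⁻¹ * (9 * Real.sqrt (Real.log pd * n * M₁ * mbar)
            + 32 * Real.log pd * M₁) + mbar := by
          have := mul_le_mul_of_nonneg_left hcore (by positivity : (0:ℝ) ≤ (n:ℝ)⁻¹)
          linarith
      _ ≤ 37 * M * (n:ℝ)⁻¹ * Real.log pd + 37 * mbar :=
          final_algebra2 hn1 hlp hM₁0 hm0 hM₁M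
end
end
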